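/- arXiv:2601.02640 — 2 statements merged into one kernel-verified Lean document; each statement's English description precedes it below -/
import Mathlib

section
/- Let d ≥ 2, p ≥ 1, K ≥ 2. Let F_1,…,F_K and F'_1,…,F'_K be probability measures on ℝ^d with finite p-th moments, and let π ∈ Δ^K. Suppose F̄ and F̄' are measures whose projections along almost every direction θ ∈ S^{d-1} have quantile functions Q_{θ♯F̄} = Σ_k π_k Q_{θ♯F_k} and Q_{θ♯F̄'} = Σ_k π_k Q_{θ♯F'_k} respectively. Then SW_p^p(F̄, F̄') ≤ Σ_{k=1}^K π_k SW_p^p(F_k, F'_k) ≤ max_{1≤k≤K} SW_p^p(F_k, F'_k). -/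
open MeasureTheory Set

/-- The p-th power of the p-Wasserstein distance, defined as the infimum of transport
costs over all couplings. -/
noncomputable def WpPow {E : Type*} [NormedAddCommGroup E] [MeasurableSpace E]
    (p : ℝ) (μ ν : Measure E) : ℝ :=
  sInf {c : ℝ | ∃ γ : Measure (E × E),
    γ.map Prod.fst = μ ∧ γ.map Prod.snd = ν ∧ c = ∫ z, ‖z.1 - z.2‖ ^ p ∂γ}

/-- The quantile function (generalized inverse CDF) of a measure on ℝ. -/
noncomputable def quantileFn (μ : Measure ℝ) (t : ℝ) : ℝ :=
  sInf {x : ℝ | t ≤ (μ (Iic x)).toReal}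

/-- The uniform (normalized surface) probability measure on the unit sphere of ℝ^d. -/
noncomputable def uniformSphere (d : ℕ) :
    Measure (Metric.sphere (0 : EuclideanSpace ℝ (Fin d)) 1) :=
  (((volume : Measure (EuclideanSpace ℝ (Fin d))).toSphere Set.univ)⁻¹) •
    (volume : Measure (EuclideanSpace ℝ (Fin d))).toSphere

/-- Projection of a point of ℝ^d onto the direction θ. -/
noncomputable def sphProj {d : ℕ} (θ : Metric.sphere (0 : EuclideanSpace ℝ (Fin d)) 1)
    (x : EuclideanSpace ℝ (Fin d)) : ℝ :=
  inner (𝕜 := ℝ) (θ : EuclideanSpace ℝ (Fin d)) x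

/-- The p-th power of the sliced Wasserstein distance on ℝ^d. -/
noncomputable def SWpPow {d : ℕ} (p : ℝ) (μ ν : Measure (EuclideanSpace ℝ (Fin d))) : ℝ :=
  ∫ θ, WpPow p (μ.map (sphProj θ)) (ν.map (sphProj θ)) ∂(uniformSphere d)

open ProbabilityTheory Filter
open scoped ENNReal

set_option linter.unusedSectionVars false
set_option linter.unusedVariables false
set_option maxHeartbeats 1000000

section QuantileBasics

/-- Modified quantile function, set to 0 outside (0,1), to make it globally measurable. -/
noncomputable def Qm (μ : Measure ℝ) (u : ℝ) : ℝ :=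
  if u ∈ Ioo (0:ℝ) 1 then quantileFn μ u else 0

lemma Qm_eq_on (μ : Measure ℝ) {u : ℝ} (hu : u ∈ Ioo (0:ℝ) 1) : Qm μ u = quantileFn μ u :=
  if_pos hu

variable (μ : Measure ℝ) [IsProbabilityMeasure μ]

lemma quantile_set_eq (u : ℝ) : {x : ℝ | u ≤ (μ (Iic x)).toReal} = {x | u ≤ cdf μ x} := by
  ext x; simp [cdf_eq_real, measureReal_def]

lemma quantile_set_nonempty {u : ℝ} (hu1 : u < 1) : {x : ℝ | u ≤ cdf μ x}.Nonempty := by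
  obtain ⟨x, hx⟩ := ((tendsto_cdf_atTop μ).eventually_const_le hu1).exists
  exact ⟨x, hx⟩

lemma quantile_set_bddBelow {u : ℝ} (hu0 : 0 < u) : BddBelow {x : ℝ | u ≤ cdf μ x} := by
  obtain ⟨x0, hx0⟩ := ((tendsto_cdf_atBot μ).eventually_lt_const hu0).exists
  refine ⟨x0, fun y hy => ?_⟩
  by_contra h
  push_neg at h
  exact absurd (le_trans hy (monotone_cdf μ h.le)) (not_le.mpr hx0)

lemma quantileFn_le_iff {u x : ℝ} (hu0 : 0 < u) (hu1 : u < 1) :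
    quantileFn μ u ≤ x ↔ u ≤ cdf μ x := by
  rw [quantileFn, quantile_set_eq]
  constructor
  · intro h
    have key : ∀ ε > 0, u ≤ cdf μ (x + ε) := by
      intro ε hε
      have hlt : sInf {x : ℝ | u ≤ cdf μ x} < x + ε := lt_of_le_of_lt h (by linarith)
      obtain ⟨y, hy, hyx⟩ := (csInf_lt_iff (quantile_set_bddBelow μ hu0)
        (quantile_set_nonempty μ hu1)).mp hlt
      exact le_trans hy (monotone_cdf μ hyx.le)
    have hto : Tendsto (cdf μ) (nhdsWithin x (Ioi x)) (nhds (cdf μ x)) :=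
      ((cdf μ).right_continuous x).tendsto.mono_left (nhdsWithin_mono x Ioi_subset_Ici_self)
    refine ge_of_tendsto hto ?_
    filter_upwards [self_mem_nhdsWithin] with t ht
    have : u ≤ cdf μ (x + (t - x)) := key _ (by simpa using ht)
    simpa using this
  · intro h
    exact csInf_le (quantile_set_bddBelow μ hu0) h

lemma measurable_Qm : Measurable (Qm μ) := by
  apply measurable_of_Iic
  intro x
  have : Qm μ ⁻¹' (Iic x) =
      (Ioo (0:ℝ) 1 ∩ Iic (cdf μ x)) ∪ ((Ioo (0:ℝ) 1)ᶜ ∩ {u : ℝ | (0:ℝ) ≤ x}) := by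
    ext u
    by_cases hu : u ∈ Ioo (0:ℝ) 1
    · simp only [mem_preimage, mem_Iic, Qm, if_pos hu, mem_union, mem_inter_iff, hu, mem_compl_iff,
        not_true, false_and, or_false, true_and, mem_setOf_eq]
      exact quantileFn_le_iff μ hu.1 hu.2
    · simp [Qm, if_neg hu, hu]
  rw [this]
  refine (measurableSet_Ioo.inter measurableSet_Iic).union
    (measurableSet_Ioo.compl.inter ?_)
  by_cases h : (0:ℝ) ≤ x <;> simp [h]

lemma vol_Ioo_inter_Iic {b : ℝ} (hb0 : 0 ≤ b) (hb1 : b ≤ 1) :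
    volume (Ioo (0:ℝ) 1 ∩ Iic b) = ENNReal.ofReal b := by
  rcases lt_or_eq_of_le hb1 with h | h
  · have : Ioo (0:ℝ) 1 ∩ Iic b = Ioc 0 b := by
      ext u
      constructor
      · rintro ⟨⟨h1, _⟩, h3⟩; exact ⟨h1, h3⟩
      · rintro ⟨h1, h2⟩; exact ⟨⟨h1, lt_of_le_of_lt h2 h⟩, h2⟩
    rw [this, Real.volume_Ioc, sub_zero]
  · have : Ioo (0:ℝ) 1 ∩ Iic b = Ioo 0 1 := by
      rw [inter_eq_left]; intro u hu; exact le_trans hu.2.le (by rw [h])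
    rw [this, Real.volume_Ioo, ← h, sub_zero]

lemma map_Qm : (volume.restrict (Ioo (0:ℝ) 1)).map (Qm μ) = μ := by
  haveI : IsProbabilityMeasure ((volume.restrict (Ioo (0:ℝ) 1)).map (Qm μ)) := by
    constructor
    rw [Measure.map_apply (measurable_Qm μ) MeasurableSet.univ]
    simp [Real.volume_Ioo]
  refine Measure.ext_of_Iic _ μ (fun x => ?_)
  rw [Measure.map_apply (measurable_Qm μ) measurableSet_Iic,
    Measure.restrict_apply' measurableSet_Ioo]
  have hset : Qm μ ⁻¹' (Iic x) ∩ Ioo (0:ℝ) 1 = Ioo (0:ℝ) 1 ∩ Iic (cdf μ x) := by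
    ext u
    constructor
    · rintro ⟨h1, h2⟩
      refine ⟨h2, ?_⟩
      rw [mem_preimage, mem_Iic, Qm_eq_on μ h2] at h1
      exact (quantileFn_le_iff μ h2.1 h2.2).mp h1
    · rintro ⟨h1, h2⟩
      refine ⟨?_, h1⟩
      rw [mem_preimage, mem_Iic, Qm_eq_on μ h1]
      exact (quantileFn_le_iff μ h1.1 h1.2).mpr h2
  rw [hset, vol_Ioo_inter_Iic (cdf_nonneg μ x) (cdf_le_one μ x), ofReal_cdf]

end QuantileBasics

section Kernel
variable {p : ℝ}

/-- The Stieltjes function `r ↦ p r^(p-1)` on `[0,∞)`, `0` before. For `p=1` it has a jump at 0. -/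
noncomputable def sigmaK (p : ℝ) (hp : 1 ≤ p) : StieltjesFunction ℝ where
  toFun r := if r < 0 then 0 else p * r ^ (p - 1)
  mono' := by
    intro r s hrs
    by_cases hr : r < 0
    · by_cases hs : s < 0
      · simp [hr, hs]
      · simp only [if_pos hr, if_neg hs]
        have : (0:ℝ) ≤ s := not_lt.mp hs
        positivity
    · have hs : ¬ s < 0 := fun h => hr (lt_of_le_of_lt hrs h)
      simp only [if_neg hr, if_neg hs]
      have hr0 : (0:ℝ) ≤ r := not_lt.mp hr
      exact mul_le_mul_of_nonneg_left (Real.rpow_le_rpow hr0 hrs (by linarith)) (by linarith)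
  right_continuous' := by
    intro x
    by_cases hx : x < 0
    · have hev : (fun r => if r < 0 then (0:ℝ) else p * r ^ (p - 1)) =ᶠ[nhds x] fun _ => (0:ℝ) := by
        filter_upwards [Iio_mem_nhds hx] with r hr
        rw [if_pos (mem_Iio.mp hr)]
      exact (continuousAt_const.congr hev.symm).continuousWithinAt
    · have hx0 : (0:ℝ) ≤ x := not_lt.mp hx
      have hg : Continuous fun r : ℝ => p * r ^ (p - 1) :=
        continuous_const.mul (continuous_id.rpow_const (fun _ => Or.inr (by linarith)))
      refine (hg.continuousWithinAt).congr (fun y hy => ?_) (by simp [hx])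
      have : ¬ y < 0 := not_lt.mpr (le_trans hx0 hy)
      simp [this]

lemma sigmaK_apply (hp : 1 ≤ p) (r : ℝ) :
    sigmaK p hp r = if r < 0 then 0 else p * r ^ (p - 1) := rfl

lemma sigmaK_tendsto_atBot (hp : 1 ≤ p) : Tendsto (sigmaK p hp) atBot (nhds 0) := by
  have hev : (sigmaK p hp : ℝ → ℝ) =ᶠ[atBot] fun _ => (0:ℝ) := by
    filter_upwards [Iio_mem_atBot (0:ℝ)] with r hr
    rw [sigmaK_apply, if_pos (mem_Iio.mp hr)]
  exact Tendsto.congr' hev.symm tendsto_const_nhds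

lemma sigmaK_measure_Iic (hp : 1 ≤ p) (x : ℝ) :
    (sigmaK p hp).measure (Iic x) = ENNReal.ofReal (if x < 0 then 0 else p * x ^ (p - 1)) := by
  rw [StieltjesFunction.measure_Iic _ (sigmaK_tendsto_atBot hp), sub_zero]
  rfl

/-- The triangular region used in the kernel representation of `|x-y|^p`. -/
def Tset (a b : ℝ) : Set (ℝ × ℝ) := {w : ℝ × ℝ | a ≤ w.1 ∧ w.1 + w.2 ≤ b}

lemma measurableSet_Tset (a b : ℝ) : MeasurableSet (Tset a b) :=
  (measurableSet_le measurable_const measurable_fst).inter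
    (measurableSet_le (measurable_fst.add measurable_snd) measurable_const)

noncomputable def rhoK (p : ℝ) (hp : 1 ≤ p) : Measure (ℝ × ℝ) :=
  (volume : Measure ℝ).prod (sigmaK p hp).measure

lemma rhoK_Tset (hp : 1 ≤ p) (a b : ℝ) :
    rhoK p hp (Tset a b) = ∫⁻ s in Ici a, ENNReal.ofReal (sigmaK p hp (b - s)) := by
  rw [rhoK, Measure.prod_apply (measurableSet_Tset a b)]
  have h1 : ∀ s : ℝ, (sigmaK p hp).measure (Prod.mk s ⁻¹' Tset a b) =
      (Ici a).indicator (fun s => ENNReal.ofReal (sigmaK p hp (b - s))) s := by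
    intro s
    have hsec : Prod.mk s ⁻¹' Tset a b = (if a ≤ s then Iic (b - s) else ∅) := by
      by_cases h : a ≤ s
      · rw [if_pos h]; ext r
        simp only [mem_preimage, Tset, mem_setOf_eq, mem_Iic, h, true_and]
        constructor <;> intro <;> linarith
      · rw [if_neg h]; ext r
        simp [Tset, h]
    rw [hsec]
    by_cases h : a ≤ s
    · rw [if_pos h, Set.indicator_of_mem (mem_Ici.mpr h), sigmaK_measure_Iic hp, sigmaK_apply]
    · rw [if_neg h, Set.indicator_of_notMem (fun hc => h (mem_Ici.mp hc)), measure_empty]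
  simp_rw [h1]
  rw [lintegral_indicator measurableSet_Ici]

lemma rhoK_Tset_of_lt (hp : 1 ≤ p) {a b : ℝ} (hab : b < a) : rhoK p hp (Tset a b) = 0 := by
  rw [rhoK_Tset hp]
  rw [show (0:ℝ≥0∞) = ∫⁻ _ in Ici a, 0 from (lintegral_zero).symm]
  apply setLIntegral_congr_fun measurableSet_Ici
  intro s hs
  dsimp only
  have h : b - s < 0 := by linarith [mem_Ici.mp hs]
  rw [sigmaK_apply, if_pos h, ENNReal.ofReal_zero]

lemma rhoK_Tset_of_le (hp : 1 ≤ p) {a b : ℝ} (hab : a ≤ b) :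
    rhoK p hp (Tset a b) = ENNReal.ofReal ((b - a) ^ p) := by
  have hp0 : (0:ℝ) < p := lt_of_lt_of_le zero_lt_one hp
  rw [rhoK_Tset hp]
  have hsplit : Ici a = Icc a b ∪ Ioi b := by
    ext s
    simp only [mem_Ici, mem_union, mem_Icc, mem_Ioi]
    constructor
    · intro h
      by_cases h2 : s ≤ b
      · exact Or.inl ⟨h, h2⟩
      · exact Or.inr (not_le.mp h2)
    · rintro (⟨h, _⟩ | h)
      · exact h
      · linarith
  rw [hsplit, lintegral_union measurableSet_Ioi]
  swap
  · rw [Set.disjoint_left]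
    intro s hs hs2
    simp only [mem_Icc] at hs
    simp only [mem_Ioi] at hs2
    linarith [hs.2]
  have h2 : ∫⁻ s in Ioi b, ENNReal.ofReal (sigmaK p hp (b - s)) = 0 := by
    rw [show (0:ℝ≥0∞) = ∫⁻ _ in Ioi b, 0 from (lintegral_zero).symm]
    apply setLIntegral_congr_fun measurableSet_Ioi
    intro s hs
    dsimp only
    have h : b - s < 0 := by linarith [mem_Ioi.mp hs]
    rw [sigmaK_apply, if_pos h, ENNReal.ofReal_zero]
  rw [h2, add_zero]
  have h3 : ∫⁻ s in Icc a b, ENNReal.ofReal (sigmaK p hp (b - s)) =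
      ∫⁻ s in Icc a b, ENNReal.ofReal (p * (b - s) ^ (p - 1)) := by
    apply setLIntegral_congr_fun measurableSet_Icc
    intro s hs
    dsimp only
    have h : ¬ (b - s < 0) := by
      simp only [mem_Icc] at hs
      push_neg
      linarith [hs.2]
    rw [sigmaK_apply, if_neg h]
  rw [h3]
  have hcont : Continuous fun s : ℝ => p * (b - s) ^ (p - 1) :=
    continuous_const.mul ((continuous_const.sub continuous_id).rpow_const
      (fun _ => Or.inr (by linarith)))
  rw [← ofReal_integral_eq_lintegral_ofReal (hcont.integrableOn_Icc)]
  swap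
  · refine (ae_restrict_iff' measurableSet_Icc).mpr ?_
    filter_upwards with s hs
    have : (0:ℝ) ≤ b - s := by
      simp only [mem_Icc] at hs
      linarith [hs.2]
    positivity
  congr 1
  rw [integral_Icc_eq_integral_Ioc, ← intervalIntegral.integral_of_le hab,
    intervalIntegral.integral_const_mul]
  have h5 : ∫ s in a..b, (b - s) ^ (p - 1) = ∫ r in (b - b)..(b - a), r ^ (p - 1) :=
    intervalIntegral.integral_comp_sub_left (fun r => r ^ (p-1)) b
  rw [h5, sub_self, integral_rpow (Or.inl (by linarith : (-1:ℝ) < p - 1))]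
  rw [sub_add_cancel, Real.zero_rpow (ne_of_gt hp0), sub_zero]
  field_simp

lemma ofReal_abs_rpow_eq (hp : 1 ≤ p) (x y : ℝ) :
    ENNReal.ofReal (|x - y| ^ p) = rhoK p hp (Tset x y) + rhoK p hp (Tset y x) := by
  have hp0 : p ≠ 0 := by intro h; rw [h] at hp; linarith
  rcases lt_trichotomy x y with h | h | h
  · rw [rhoK_Tset_of_le hp h.le, rhoK_Tset_of_lt hp h, add_zero, abs_of_nonpos (by linarith),
      neg_sub]
  · subst h
    rw [rhoK_Tset_of_le hp le_rfl, sub_self, abs_zero, Real.zero_rpow hp0,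
      ENNReal.ofReal_zero, add_zero]
  · rw [rhoK_Tset_of_le hp h.le, rhoK_Tset_of_lt hp h, zero_add, abs_of_nonneg (by linarith)]

end Kernel

section Coupling
variable {p : ℝ}

lemma Lm_prob : IsProbabilityMeasure (volume.restrict (Ioo (0:ℝ) 1)) := by
  constructor
  rw [Measure.restrict_apply MeasurableSet.univ, univ_inter, Real.volume_Ioo]
  norm_num

/-- The quantile (monotone) coupling of two measures on ℝ. -/
noncomputable def qcoupling (μ ν : Measure ℝ) : Measure (ℝ × ℝ) :=
  (volume.restrict (Ioo (0:ℝ) 1)).map (fun u => (Qm μ u, Qm ν u))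

variable (μ ν : Measure ℝ) [IsProbabilityMeasure μ] [IsProbabilityMeasure ν]

lemma qcoupling_fst : (qcoupling μ ν).map Prod.fst = μ := by
  rw [qcoupling, Measure.map_map measurable_fst ((measurable_Qm μ).prodMk (measurable_Qm ν))]
  exact map_Qm μ

lemma qcoupling_snd : (qcoupling μ ν).map Prod.snd = ν := by
  rw [qcoupling, Measure.map_map measurable_snd ((measurable_Qm μ).prodMk (measurable_Qm ν))]
  exact map_Qm ν

lemma qcoupling_swap : (qcoupling μ ν).map Prod.swap = qcoupling ν μ := by
  rw [qcoupling, Measure.map_map measurable_swap ((measurable_Qm μ).prodMk (measurable_Qm ν))]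
  rfl

lemma coupling_prob (γ : Measure (ℝ × ℝ)) (hγ1 : γ.map Prod.fst = μ) :
    IsProbabilityMeasure γ := by
  constructor
  rw [show (univ : Set (ℝ × ℝ)) = Prod.fst ⁻¹' univ from (preimage_univ).symm,
    ← Measure.map_apply measurable_fst MeasurableSet.univ, hγ1, measure_univ]

/-- Fréchet–Hoeffding-type bound: any coupling gives more mass than the lower Fréchet bound
to "southeast" sets. -/
lemma coupling_section_ge (γ : Measure (ℝ × ℝ)) (hγ1 : γ.map Prod.fst = μ)
    (hγ2 : γ.map Prod.snd = ν) (s t : ℝ) :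
    μ (Iic s) - ν (Iio t) ≤ γ {z : ℝ × ℝ | z.1 ≤ s ∧ t ≤ z.2} := by
  rw [tsub_le_iff_right]
  have h1 : μ (Iic s) = γ {z : ℝ × ℝ | z.1 ≤ s} := by
    rw [← hγ1, Measure.map_apply measurable_fst measurableSet_Iic]; rfl
  have h2 : ν (Iio t) = γ {z : ℝ × ℝ | z.2 < t} := by
    rw [← hγ2, Measure.map_apply measurable_snd measurableSet_Iio]; rfl
  rw [h1, h2]
  have hsub : {z : ℝ × ℝ | z.1 ≤ s} ⊆ {z : ℝ × ℝ | z.1 ≤ s ∧ t ≤ z.2} ∪ {z : ℝ × ℝ | z.2 < t} := by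
    intro z hz
    by_cases h : t ≤ z.2
    · exact Or.inl ⟨hz, h⟩
    · exact Or.inr (not_le.mp h)
  exact le_trans (measure_mono hsub) (measure_union_le _ _)

/-- The quantile coupling achieves the lower Fréchet bound on southeast sets. -/
lemma qcoupling_section_le (s t : ℝ) :
    qcoupling μ ν {z : ℝ × ℝ | z.1 ≤ s ∧ t ≤ z.2} ≤ μ (Iic s) - ν (Iio t) := by
  have hms : MeasurableSet {z : ℝ × ℝ | z.1 ≤ s ∧ t ≤ z.2} := by
    rw [setOf_and]
    exact (measurableSet_le measurable_fst measurable_const).inter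
      (measurableSet_le measurable_const measurable_snd)
  rw [qcoupling, Measure.map_apply ((measurable_Qm μ).prodMk (measurable_Qm ν)) hms,
    Measure.restrict_apply (((measurable_Qm μ).prodMk (measurable_Qm ν)) hms)]
  set b := cdf μ s with hb
  set c := (ν (Iio t)).toReal with hc
  have hνt : ν (Iio t) ≠ ⊤ := measure_ne_top ν _
  have hsub : (fun u => (Qm μ u, Qm ν u)) ⁻¹' {z : ℝ × ℝ | z.1 ≤ s ∧ t ≤ z.2} ∩ Ioo (0:ℝ) 1
      ⊆ Icc c b := by
    rintro u ⟨hu, hu01⟩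
    simp only [mem_preimage, mem_setOf_eq, Qm_eq_on μ hu01, Qm_eq_on ν hu01] at hu
    constructor
    · -- c ≤ u
      have hkey : ∀ x < t, cdf ν x < u := by
        intro x hx
        by_contra hcon
        push_neg at hcon
        have := (quantileFn_le_iff ν hu01.1 hu01.2).mpr hcon
        linarith [hu.2]
      have hle : ν (Iio t) ≤ ENNReal.ofReal u := by
        have hunion : Iio t = ⋃ n : ℕ, Iic (t - 1/(n+1)) := by
          ext x
          simp only [mem_Iio, mem_iUnion, mem_Iic]
          constructor
          · intro hx
            obtain ⟨n, hn⟩ := exists_nat_one_div_lt (show (0:ℝ) < t - x by linarith)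
            exact ⟨n, by linarith⟩
          · rintro ⟨n, hn⟩
            have : (0:ℝ) < 1/(n+1) := by positivity
            linarith
        rw [hunion]
        rw [Directed.measure_iUnion]
        · refine iSup_le fun n => ?_
          rw [← ofReal_cdf ν]
          exact ENNReal.ofReal_le_ofReal (hkey _ (by
            have : (0:ℝ) < 1/((n:ℝ)+1) := by positivity
            linarith)).le
        · intro m n
          rcases le_total (m:ℕ) n with h | h
          · exact ⟨n, Iic_subset_Iic.mpr (by
              have : (1:ℝ)/(n+1) ≤ 1/(m+1) := by
                apply one_div_le_one_div_of_le <;> [positivity; exact_mod_cast by omega]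
              linarith), subset_rfl⟩
          · exact ⟨m, subset_rfl, Iic_subset_Iic.mpr (by
              have : (1:ℝ)/(m+1) ≤ 1/(n+1) := by
                apply one_div_le_one_div_of_le <;> [positivity; exact_mod_cast by omega]
              linarith)⟩
      rw [hc]
      exact ENNReal.toReal_le_of_le_ofReal (le_of_lt hu01.1) hle
    · exact (quantileFn_le_iff μ hu01.1 hu01.2).mp hu.1
  calc volume ((fun u => (Qm μ u, Qm ν u)) ⁻¹' {z : ℝ × ℝ | z.1 ≤ s ∧ t ≤ z.2} ∩ Ioo (0:ℝ) 1)
      ≤ volume (Icc c b) := measure_mono hsub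
    _ = ENNReal.ofReal (b - c) := by rw [Real.volume_Icc]
    _ = ENNReal.ofReal b - ENNReal.ofReal c := ENNReal.ofReal_sub b (ENNReal.toReal_nonneg)
    _ = μ (Iic s) - ν (Iio t) := by rw [hb, ofReal_cdf, hc, ENNReal.ofReal_toReal hνt]

end Coupling

section Swap
variable {p : ℝ}

instance rhoK_sfinite (p : ℝ) (hp : 1 ≤ p) : SFinite (rhoK p hp) := by
  unfold rhoK; infer_instance

lemma measurableSet_S : MeasurableSet {zw : (ℝ × ℝ) × (ℝ × ℝ) |
    zw.1.1 ≤ zw.2.1 ∧ zw.2.1 + zw.2.2 ≤ zw.1.2} := by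
  rw [setOf_and]
  exact (measurableSet_le measurable_fst.fst measurable_snd.fst).inter
    (measurableSet_le (measurable_snd.fst.add measurable_snd.snd) measurable_fst.snd)

lemma indicator_S_eq (hp : 1 ≤ p) (z w : ℝ × ℝ) :
    ({zw : (ℝ × ℝ) × (ℝ × ℝ) | zw.1.1 ≤ zw.2.1 ∧ zw.2.1 + zw.2.2 ≤ zw.1.2}).indicator
      (fun _ => (1:ℝ≥0∞)) (z, w) = (Tset z.1 z.2).indicator (fun _ => (1:ℝ≥0∞)) w := by
  rfl

lemma rhoK_Tset_as_lintegral (hp : 1 ≤ p) (z : ℝ × ℝ) :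
    rhoK p hp (Tset z.1 z.2) = ∫⁻ w, ({zw : (ℝ × ℝ) × (ℝ × ℝ) |
      zw.1.1 ≤ zw.2.1 ∧ zw.2.1 + zw.2.2 ≤ zw.1.2}).indicator (fun _ => (1:ℝ≥0∞)) (z, w)
      ∂(rhoK p hp) := by
  simp_rw [indicator_S_eq hp z]
  rw [lintegral_indicator_const (measurableSet_Tset z.1 z.2), one_mul]

lemma measurable_rhoK_Tset (hp : 1 ≤ p) :
    Measurable (fun z : ℝ × ℝ => rhoK p hp (Tset z.1 z.2)) := by
  simp_rw [rhoK_Tset_as_lintegral hp]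
  exact Measurable.lintegral_prod_right' (measurable_const.indicator measurableSet_S)

lemma swap_T (hp : 1 ≤ p) (κ : Measure (ℝ × ℝ)) [SFinite κ] :
    ∫⁻ z, rhoK p hp (Tset z.1 z.2) ∂κ
      = ∫⁻ w, κ {z : ℝ × ℝ | z.1 ≤ w.1 ∧ w.1 + w.2 ≤ z.2} ∂(rhoK p hp) := by
  simp_rw [rhoK_Tset_as_lintegral hp]
  have hmeas : Measurable (Function.uncurry fun (z w : ℝ × ℝ) =>
      ({zw : (ℝ × ℝ) × (ℝ × ℝ) | zw.1.1 ≤ zw.2.1 ∧ zw.2.1 + zw.2.2 ≤ zw.1.2}).indicator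
        (fun _ => (1:ℝ≥0∞)) (z, w)) := by
    have h : Measurable (fun zw : (ℝ × ℝ) × (ℝ × ℝ) =>
        ({zw : (ℝ × ℝ) × (ℝ × ℝ) | zw.1.1 ≤ zw.2.1 ∧ zw.2.1 + zw.2.2 ≤ zw.1.2}).indicator
          (fun _ => (1:ℝ≥0∞)) (zw.1, zw.2)) :=
      (measurable_const.indicator measurableSet_S).comp (measurable_fst.prodMk measurable_snd)
    exact h
  rw [lintegral_lintegral_swap hmeas.aemeasurable]
  congr 1
  ext w
  have hsec : ∀ z : ℝ × ℝ, ({zw : (ℝ × ℝ) × (ℝ × ℝ) |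
      zw.1.1 ≤ zw.2.1 ∧ zw.2.1 + zw.2.2 ≤ zw.1.2}).indicator (fun _ => (1:ℝ≥0∞)) (z, w)
      = ({z : ℝ × ℝ | z.1 ≤ w.1 ∧ w.1 + w.2 ≤ z.2}).indicator (fun _ => (1:ℝ≥0∞)) z := by
    intro z
    rfl
  simp_rw [hsec]
  rw [lintegral_indicator_const ?_ , one_mul]
  rw [setOf_and]
  exact (measurableSet_le measurable_fst measurable_const).inter
    (measurableSet_le measurable_const measurable_snd)

/-- Main comparison: the lintegral cost decomposes into `ρ`-integrals of southeast sections. -/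
lemma lintegral_cost_eq (hp : 1 ≤ p) (κ : Measure (ℝ × ℝ)) [SFinite κ] [SFinite (κ.map Prod.swap)] :
    ∫⁻ z, ENNReal.ofReal (|z.1 - z.2| ^ p) ∂κ
      = (∫⁻ w, κ {z : ℝ × ℝ | z.1 ≤ w.1 ∧ w.1 + w.2 ≤ z.2} ∂(rhoK p hp))
        + ∫⁻ w, (κ.map Prod.swap) {z : ℝ × ℝ | z.1 ≤ w.1 ∧ w.1 + w.2 ≤ z.2} ∂(rhoK p hp) := by
  have h1 : ∫⁻ z, ENNReal.ofReal (|z.1 - z.2| ^ p) ∂κ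
      = ∫⁻ z, (rhoK p hp (Tset z.1 z.2) + rhoK p hp (Tset z.2 z.1)) ∂κ := by
    congr 1
    ext z
    exact ofReal_abs_rpow_eq hp z.1 z.2
  rw [h1, lintegral_add_left (measurable_rhoK_Tset hp), swap_T hp κ]
  congr 1
  have h2 : ∫⁻ z, rhoK p hp (Tset z.2 z.1) ∂κ
      = ∫⁻ z, rhoK p hp (Tset z.1 z.2) ∂(κ.map Prod.swap) := by
    rw [lintegral_map (measurable_rhoK_Tset hp) measurable_swap]
    rfl
  rw [h2, swap_T hp]

end Swap

section Main1D
variable {p : ℝ}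

lemma cost_cont (hp : 1 ≤ p) : Continuous fun z : ℝ × ℝ => |z.1 - z.2| ^ p :=
  ((continuous_fst.sub continuous_snd).abs).rpow_const (fun _ => Or.inr (by linarith))

lemma cost_nonneg (z : ℝ × ℝ) : 0 ≤ |z.1 - z.2| ^ p := Real.rpow_nonneg (abs_nonneg _) p

lemma abs_rpow_le (hp : 1 ≤ p) (a b : ℝ) : |a - b| ^ p ≤ 2 ^ p * (|a| ^ p + |b| ^ p) := by
  have h0p : (0:ℝ) ≤ p := by linarith
  set m := max |a| |b| with hm
  have hm0 : 0 ≤ m := le_trans (abs_nonneg a) (le_max_left _ _)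
  have h1 : |a - b| ≤ 2 * m := by
    calc |a - b| ≤ |a| + |b| := abs_sub _ _
      _ ≤ m + m := add_le_add (le_max_left _ _) (le_max_right _ _)
      _ = 2 * m := by ring
  calc |a - b| ^ p ≤ (2 * m) ^ p := Real.rpow_le_rpow (abs_nonneg _) h1 h0p
    _ = 2 ^ p * m ^ p := Real.mul_rpow (by norm_num) hm0
    _ ≤ 2 ^ p * (|a| ^ p + |b| ^ p) := by
        apply mul_le_mul_of_nonneg_left _ (Real.rpow_nonneg (by norm_num) p)
        rcases max_cases |a| |b| with ⟨h, _⟩ | ⟨h, _⟩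
        · rw [hm, h]; nlinarith [Real.rpow_nonneg (abs_nonneg b) p]
        · rw [hm, h]; nlinarith [Real.rpow_nonneg (abs_nonneg a) p]

variable (μ ν : Measure ℝ) [IsProbabilityMeasure μ] [IsProbabilityMeasure ν]

/-- With finite p-th moments of the marginals, the cost is integrable for any coupling. -/
lemma cost_integrable (hp : 1 ≤ p) (hμ : Integrable (fun x : ℝ => |x| ^ p) μ)
    (hν : Integrable (fun x : ℝ => |x| ^ p) ν) (γ : Measure (ℝ × ℝ))
    (hγ1 : γ.map Prod.fst = μ) (hγ2 : γ.map Prod.snd = ν) :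
    Integrable (fun z : ℝ × ℝ => |z.1 - z.2| ^ p) γ := by
  haveI := coupling_prob μ γ hγ1
  have habs : Continuous fun x : ℝ => |x| ^ p :=
    continuous_abs.rpow_const (fun _ => Or.inr (by linarith))
  have h1 : Integrable (fun z : ℝ × ℝ => |z.1| ^ p) γ := by
    rw [← hγ1] at hμ
    exact (integrable_map_measure habs.aestronglyMeasurable
      measurable_fst.aemeasurable).mp hμ
  have h2 : Integrable (fun z : ℝ × ℝ => |z.2| ^ p) γ := by
    rw [← hγ2] at hν
    exact (integrable_map_measure habs.aestronglyMeasurable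
      measurable_snd.aemeasurable).mp hν
  refine Integrable.mono' (((h1.add h2).const_mul (2 ^ p)))
    (cost_cont hp).aestronglyMeasurable ?_
  filter_upwards with z
  rw [Real.norm_eq_abs, abs_of_nonneg (cost_nonneg z)]
  exact abs_rpow_le hp z.1 z.2

/-- Monotone rearrangement is optimal: lintegral version. -/
lemma lintegral_qcoupling_le (hp : 1 ≤ p) (γ : Measure (ℝ × ℝ))
    (hγ1 : γ.map Prod.fst = μ) (hγ2 : γ.map Prod.snd = ν) :
    ∫⁻ z, ENNReal.ofReal (|z.1 - z.2| ^ p) ∂(qcoupling μ ν)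
      ≤ ∫⁻ z, ENNReal.ofReal (|z.1 - z.2| ^ p) ∂γ := by
  haveI hγp : IsProbabilityMeasure γ := coupling_prob μ γ hγ1
  haveI hqp : IsProbabilityMeasure (qcoupling μ ν) := coupling_prob μ _ (qcoupling_fst μ ν)
  haveI : IsProbabilityMeasure (γ.map Prod.swap) :=
    Measure.isProbabilityMeasure_map measurable_swap.aemeasurable
  haveI : IsProbabilityMeasure ((qcoupling μ ν).map Prod.swap) :=
    Measure.isProbabilityMeasure_map measurable_swap.aemeasurable
  rw [lintegral_cost_eq hp (qcoupling μ ν), lintegral_cost_eq hp γ]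
  have hswap1 : (γ.map Prod.swap).map Prod.fst = ν := by
    rw [Measure.map_map measurable_fst measurable_swap]
    exact hγ2
  have hswap2 : (γ.map Prod.swap).map Prod.snd = μ := by
    rw [Measure.map_map measurable_snd measurable_swap]
    exact hγ1
  apply add_le_add
  · apply lintegral_mono
    intro w
    exact le_trans (qcoupling_section_le μ ν w.1 (w.1 + w.2))
      (coupling_section_ge μ ν γ hγ1 hγ2 w.1 (w.1 + w.2))
  · apply lintegral_mono
    intro w
    rw [qcoupling_swap μ ν]
    exact le_trans (qcoupling_section_le ν μ w.1 (w.1 + w.2))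
      (coupling_section_ge ν μ (γ.map Prod.swap) hswap1 hswap2 w.1 (w.1 + w.2))

lemma couplings_nonempty : ∃ c : ℝ, ∃ γ : Measure (ℝ × ℝ),
    γ.map Prod.fst = μ ∧ γ.map Prod.snd = ν ∧ c = ∫ z, ‖z.1 - z.2‖ ^ p ∂γ :=
  ⟨_, qcoupling μ ν, qcoupling_fst μ ν, qcoupling_snd μ ν, rfl⟩

lemma couplings_bddBelow : BddBelow {c : ℝ | ∃ γ : Measure (ℝ × ℝ),
    γ.map Prod.fst = μ ∧ γ.map Prod.snd = ν ∧ c = ∫ z, ‖z.1 - z.2‖ ^ p ∂γ} := by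
  refine ⟨0, fun c hc => ?_⟩
  obtain ⟨γ, -, -, rfl⟩ := hc
  exact integral_nonneg fun z => Real.rpow_nonneg (norm_nonneg _) p

omit [IsProbabilityMeasure μ] [IsProbabilityMeasure ν] in
lemma WpPow_nonneg' : 0 ≤ WpPow p μ ν := by
  rw [WpPow]
  exact Real.sInf_nonneg fun c hc => by
    obtain ⟨γ, -, -, rfl⟩ := hc
    exact integral_nonneg fun z => Real.rpow_nonneg (norm_nonneg _) p

lemma qcost_eq (hp : 1 ≤ p) : ∫ z, ‖z.1 - z.2‖ ^ p ∂(qcoupling μ ν)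
    = ∫ u in Ioo (0:ℝ) 1, |quantileFn μ u - quantileFn ν u| ^ p := by
  rw [qcoupling, integral_map ((measurable_Qm μ).prodMk (measurable_Qm ν)).aemeasurable
    ((cost_cont hp).aestronglyMeasurable.congr ?_)]
  · refine setIntegral_congr_fun measurableSet_Ioo (fun u hu => ?_)
    simp only [Real.norm_eq_abs, Qm_eq_on μ hu, Qm_eq_on ν hu]
  · filter_upwards with z
    rw [Real.norm_eq_abs]

lemma WpPow_le_quantile_integral (hp : 1 ≤ p) :
    WpPow p μ ν ≤ ∫ u in Ioo (0:ℝ) 1, |quantileFn μ u - quantileFn ν u| ^ p := by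
  rw [← qcost_eq μ ν hp, WpPow]
  exact csInf_le (couplings_bddBelow μ ν)
    ⟨qcoupling μ ν, qcoupling_fst μ ν, qcoupling_snd μ ν, rfl⟩

lemma quantile_integral_le_WpPow (hp : 1 ≤ p) (hμ : Integrable (fun x : ℝ => |x| ^ p) μ)
    (hν : Integrable (fun x : ℝ => |x| ^ p) ν) :
    ∫ u in Ioo (0:ℝ) 1, |quantileFn μ u - quantileFn ν u| ^ p ≤ WpPow p μ ν := by
  rw [WpPow]
  refine le_csInf ⟨_, ⟨qcoupling μ ν, qcoupling_fst μ ν, qcoupling_snd μ ν, rfl⟩⟩ ?_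
  rintro c ⟨γ, hγ1, hγ2, rfl⟩
  haveI hγp : IsProbabilityMeasure γ := coupling_prob μ γ hγ1
  haveI hqp : IsProbabilityMeasure (qcoupling μ ν) := coupling_prob μ _ (qcoupling_fst μ ν)
  have hint : Integrable (fun z : ℝ × ℝ => |z.1 - z.2| ^ p) γ :=
    cost_integrable μ ν hp hμ hν γ hγ1 hγ2
  have hRHSnorm : ∫ z, ‖z.1 - z.2‖ ^ p ∂γ = ∫ z, |z.1 - z.2| ^ p ∂γ := by
    simp only [Real.norm_eq_abs]
  rw [hRHSnorm]
  -- convert both sides to lintegrals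
  have hRHS : ∫ z, |z.1 - z.2| ^ p ∂γ
      = (∫⁻ z, ENNReal.ofReal (|z.1 - z.2| ^ p) ∂γ).toReal := by
    rw [integral_eq_lintegral_of_nonneg_ae (Eventually.of_forall cost_nonneg)
      hint.aestronglyMeasurable]
  have hRHS_fin : (∫⁻ z, ENNReal.ofReal (|z.1 - z.2| ^ p) ∂γ) ≠ ⊤ := by
    have h := hint.hasFiniteIntegral
    rw [HasFiniteIntegral] at h
    have heq : ∫⁻ z, ENNReal.ofReal (|z.1 - z.2| ^ p) ∂γ = ∫⁻ z, ‖|z.1 - z.2| ^ p‖₊ ∂γ := by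
      apply lintegral_congr
      intro z
      exact (Real.enorm_eq_ofReal (cost_nonneg z)).symm
    rw [heq]
    exact h.ne
  -- LHS via Qm and lintegral
  have hmQ : Measurable fun u => |Qm μ u - Qm ν u| ^ p :=
    ((continuous_abs.rpow_const (fun _ => Or.inr (by linarith))).measurable).comp
      ((measurable_Qm μ).sub (measurable_Qm ν))
  have hLHS : ∫ u in Ioo (0:ℝ) 1, |quantileFn μ u - quantileFn ν u| ^ p
      = (∫⁻ u in Ioo (0:ℝ) 1, ENNReal.ofReal (|Qm μ u - Qm ν u| ^ p)).toReal := by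
    rw [show (∫ u in Ioo (0:ℝ) 1, |quantileFn μ u - quantileFn ν u| ^ p)
        = ∫ u in Ioo (0:ℝ) 1, |Qm μ u - Qm ν u| ^ p from
      setIntegral_congr_fun measurableSet_Ioo (fun u hu => by
        simp only [Qm_eq_on μ hu, Qm_eq_on ν hu])]
    rw [integral_eq_lintegral_of_nonneg_ae
      (Eventually.of_forall (fun u => Real.rpow_nonneg (abs_nonneg _) p))
      hmQ.aestronglyMeasurable]
  have hlin : ∫⁻ u in Ioo (0:ℝ) 1, ENNReal.ofReal (|Qm μ u - Qm ν u| ^ p)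
      ≤ ∫⁻ z, ENNReal.ofReal (|z.1 - z.2| ^ p) ∂γ := by
    have hmap : ∫⁻ z, ENNReal.ofReal (|z.1 - z.2| ^ p) ∂(qcoupling μ ν)
        = ∫⁻ u in Ioo (0:ℝ) 1, ENNReal.ofReal (|Qm μ u - Qm ν u| ^ p) := by
      rw [qcoupling, lintegral_map ((cost_cont hp).measurable.ennreal_ofReal)
        ((measurable_Qm μ).prodMk (measurable_Qm ν))]
    rw [← hmap]
    exact lintegral_qcoupling_le μ ν hp γ hγ1 hγ2
  rw [hLHS, hRHS]
  exact ENNReal.toReal_le_toReal (ne_top_of_le_ne_top hRHS_fin hlin) hRHS_fin |>.mpr hlin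

end Main1D

section Sphere

variable {d : ℕ} {p : ℝ}

lemma uniformSphere_finite (d : ℕ) : IsFiniteMeasure (uniformSphere d) := by
  constructor
  rw [uniformSphere, Measure.smul_apply, smul_eq_mul]
  set c := (volume : Measure (EuclideanSpace ℝ (Fin d))).toSphere Set.univ
  rcases eq_or_ne c 0 with h | h0
  · simp [h]
  rcases eq_or_ne c ⊤ with h | htop
  · simp [h]
  · rw [ENNReal.inv_mul_cancel h0 htop]
    exact ENNReal.one_lt_top

lemma continuous_sphProj (θ : Metric.sphere (0 : EuclideanSpace ℝ (Fin d)) 1) :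
    Continuous (sphProj θ) :=
  Continuous.inner continuous_const continuous_id

lemma measurable_sphProj (θ : Metric.sphere (0 : EuclideanSpace ℝ (Fin d)) 1) :
    Measurable (sphProj θ) := (continuous_sphProj θ).measurable

lemma norm_sphθ (θ : Metric.sphere (0 : EuclideanSpace ℝ (Fin d)) 1) :
    ‖(θ : EuclideanSpace ℝ (Fin d))‖ = 1 := by
  have := θ.2
  rwa [mem_sphere_zero_iff_norm] at this

lemma abs_sphProj_le (θ : Metric.sphere (0 : EuclideanSpace ℝ (Fin d)) 1)
    (y : EuclideanSpace ℝ (Fin d)) : |sphProj θ y| ≤ ‖y‖ := by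
  have h := abs_real_inner_le_norm (θ : EuclideanSpace ℝ (Fin d)) y
  rwa [norm_sphθ θ, one_mul] at h

variable (μ : Measure (EuclideanSpace ℝ (Fin d))) [IsProbabilityMeasure μ]

lemma mapProj_prob (θ : Metric.sphere (0 : EuclideanSpace ℝ (Fin d)) 1) :
    IsProbabilityMeasure (μ.map (sphProj θ)) :=
  Measure.isProbabilityMeasure_map (measurable_sphProj θ).aemeasurable

lemma moment_proj (hp : 1 ≤ p) (hμ : Integrable (fun x => ‖x‖ ^ p) μ)
    (θ : Metric.sphere (0 : EuclideanSpace ℝ (Fin d)) 1) :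
    Integrable (fun x : ℝ => |x| ^ p) (μ.map (sphProj θ)) := by
  have habs : Continuous fun x : ℝ => |x| ^ p :=
    continuous_abs.rpow_const (fun _ => Or.inr (by linarith))
  rw [integrable_map_measure habs.aestronglyMeasurable (measurable_sphProj θ).aemeasurable]
  refine Integrable.mono' hμ (habs.measurable.comp (measurable_sphProj θ)).aestronglyMeasurable ?_
  filter_upwards with y
  rw [Function.comp_apply, Real.norm_eq_abs, abs_of_nonneg (Real.rpow_nonneg (abs_nonneg _) p)]
  exact Real.rpow_le_rpow (abs_nonneg _) (abs_sphProj_le θ y) (by linarith)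

lemma integral_abs_rpow_proj_le (hp : 1 ≤ p) (hμ : Integrable (fun x => ‖x‖ ^ p) μ)
    (θ : Metric.sphere (0 : EuclideanSpace ℝ (Fin d)) 1) :
    ∫ x, |x| ^ p ∂(μ.map (sphProj θ)) ≤ ∫ y, ‖y‖ ^ p ∂μ := by
  have habs : Continuous fun x : ℝ => |x| ^ p :=
    continuous_abs.rpow_const (fun _ => Or.inr (by linarith))
  rw [integral_map (measurable_sphProj θ).aemeasurable habs.aestronglyMeasurable]
  refine integral_mono ?_ hμ ?_
  · have h := moment_proj μ hp hμ θ
    rwa [integrable_map_measure habs.aestronglyMeasurable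
      (measurable_sphProj θ).aemeasurable] at h
  · intro y
    exact Real.rpow_le_rpow (abs_nonneg _) (abs_sphProj_le θ y) (by linarith)

/-- Joint measurability of the modified quantile function of the projections. -/
lemma measurable_qm2 :
    Measurable (fun w : (Metric.sphere (0 : EuclideanSpace ℝ (Fin d)) 1) × ℝ =>
      Qm (μ.map (sphProj w.1)) w.2) := by
  apply measurable_of_Iic
  intro x
  have hs : MeasurableSet {w : (Metric.sphere (0 : EuclideanSpace ℝ (Fin d)) 1) ×
      (EuclideanSpace ℝ (Fin d)) | inner (𝕜 := ℝ) (w.1 : EuclideanSpace ℝ (Fin d)) w.2 ≤ x} :=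
    measurableSet_le (((continuous_subtype_val.comp continuous_fst).inner
      continuous_snd).measurable) measurable_const
  have hΦ : Measurable fun θ : (Metric.sphere (0 : EuclideanSpace ℝ (Fin d)) 1) =>
      μ (Prod.mk θ ⁻¹' {w : (Metric.sphere (0 : EuclideanSpace ℝ (Fin d)) 1) ×
        (EuclideanSpace ℝ (Fin d)) | inner (𝕜 := ℝ) (w.1 : EuclideanSpace ℝ (Fin d)) w.2 ≤ x}) :=
    measurable_measure_prodMk_left hs
  have hkey : ∀ θ : (Metric.sphere (0 : EuclideanSpace ℝ (Fin d)) 1),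
      (μ.map (sphProj θ)) (Iic x) = μ (Prod.mk θ ⁻¹' {w : (Metric.sphere
        (0 : EuclideanSpace ℝ (Fin d)) 1) × (EuclideanSpace ℝ (Fin d)) |
        inner (𝕜 := ℝ) (w.1 : EuclideanSpace ℝ (Fin d)) w.2 ≤ x}) := by
    intro θ
    rw [Measure.map_apply (measurable_sphProj θ) measurableSet_Iic]
    rfl
  have hset : (fun w : (Metric.sphere (0 : EuclideanSpace ℝ (Fin d)) 1) × ℝ =>
      Qm (μ.map (sphProj w.1)) w.2) ⁻¹' (Iic x)
      = ((Prod.snd ⁻¹' (Ioo (0:ℝ) 1)) ∩ {w : (Metric.sphere (0 : EuclideanSpace ℝ (Fin d)) 1) × ℝ |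
          w.2 ≤ ((μ.map (sphProj w.1)) (Iic x)).toReal})
        ∪ ((Prod.snd ⁻¹' (Ioo (0:ℝ) 1))ᶜ ∩ {w : (Metric.sphere (0 : EuclideanSpace ℝ
            (Fin d)) 1) × ℝ | (0:ℝ) ≤ x}) := by
    ext w
    haveI := mapProj_prob μ w.1
    by_cases hw : w.2 ∈ Ioo (0:ℝ) 1
    · simp only [mem_preimage, mem_Iic, Qm_eq_on _ hw, mem_union, mem_inter_iff, mem_compl_iff,
        hw, not_true, false_and, or_false, true_and, mem_setOf_eq]
      rw [quantileFn_le_iff _ hw.1 hw.2, cdf_eq_real, measureReal_def]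
    · simp only [mem_preimage, mem_Iic, Qm, if_neg hw, mem_union, mem_inter_iff, mem_compl_iff,
        hw, not_false_iff, false_and, true_and, false_or, mem_setOf_eq, if_false]
  rw [hset]
  refine MeasurableSet.union ?_ ?_
  · refine (measurable_snd measurableSet_Ioo).inter ?_
    have : Measurable fun w : (Metric.sphere (0 : EuclideanSpace ℝ (Fin d)) 1) × ℝ =>
        ((μ.map (sphProj w.1)) (Iic x)).toReal := by
      have : Measurable fun θ : (Metric.sphere (0 : EuclideanSpace ℝ (Fin d)) 1) =>
          ((μ.map (sphProj θ)) (Iic x)).toReal := by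
        apply Measurable.ennreal_toReal
        simp_rw [hkey]
        exact hΦ
      exact this.comp measurable_fst
    exact measurableSet_le measurable_snd this
  · refine ((measurable_snd measurableSet_Ioo).compl).inter ?_
    by_cases h : (0:ℝ) ≤ x <;> simp [h]

end Sphere

section PerTheta

variable {d : ℕ} {p : ℝ}
variable (μ ν : Measure (EuclideanSpace ℝ (Fin d))) [IsProbabilityMeasure μ]
  [IsProbabilityMeasure ν]

lemma Qm_moment_int (hp : 1 ≤ p) (hμ : Integrable (fun x => ‖x‖ ^ p) μ)
    (θ : Metric.sphere (0 : EuclideanSpace ℝ (Fin d)) 1) :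
    Integrable (fun u => |Qm (μ.map (sphProj θ)) u| ^ p) (volume.restrict (Ioo (0:ℝ) 1)) := by
  haveI := mapProj_prob μ θ
  have habs : Continuous fun x : ℝ => |x| ^ p :=
    continuous_abs.rpow_const (fun _ => Or.inr (by linarith))
  have h := moment_proj μ hp hμ θ
  rw [← map_Qm (μ.map (sphProj θ)),
    integrable_map_measure habs.aestronglyMeasurable
      (measurable_Qm (μ.map (sphProj θ))).aemeasurable] at h
  exact h

lemma integral_Qm_moment (hp : 1 ≤ p)
    (θ : Metric.sphere (0 : EuclideanSpace ℝ (Fin d)) 1) :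
    ∫ u in Ioo (0:ℝ) 1, |Qm (μ.map (sphProj θ)) u| ^ p
      = ∫ x, |x| ^ p ∂(μ.map (sphProj θ)) := by
  haveI := mapProj_prob μ θ
  have habs : Continuous fun x : ℝ => |x| ^ p :=
    continuous_abs.rpow_const (fun _ => Or.inr (by linarith))
  conv_rhs => rw [← map_Qm (μ.map (sphProj θ))]
  rw [integral_map (measurable_Qm (μ.map (sphProj θ))).aemeasurable habs.aestronglyMeasurable]

lemma Qm_diff_int (hp : 1 ≤ p) (hμ : Integrable (fun x => ‖x‖ ^ p) μ)
    (hν : Integrable (fun x => ‖x‖ ^ p) ν)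
    (θ : Metric.sphere (0 : EuclideanSpace ℝ (Fin d)) 1) :
    Integrable (fun u => |Qm (μ.map (sphProj θ)) u - Qm (ν.map (sphProj θ)) u| ^ p)
      (volume.restrict (Ioo (0:ℝ) 1)) := by
  haveI := mapProj_prob μ θ
  haveI := mapProj_prob ν θ
  have habs : Continuous fun x : ℝ => |x| ^ p :=
    continuous_abs.rpow_const (fun _ => Or.inr (by linarith))
  refine Integrable.mono' (((Qm_moment_int μ hp hμ θ).add (Qm_moment_int ν hp hν θ)).const_mul
    (2 ^ p)) ((habs.measurable.comp ((measurable_Qm (μ.map (sphProj θ))).sub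
      (measurable_Qm (ν.map (sphProj θ))))).aestronglyMeasurable) ?_
  filter_upwards with u
  rw [Real.norm_eq_abs, abs_of_nonneg (Real.rpow_nonneg (abs_nonneg _) p)]
  exact abs_rpow_le hp _ _

lemma quantile_diff_int (hp : 1 ≤ p) (hμ : Integrable (fun x => ‖x‖ ^ p) μ)
    (hν : Integrable (fun x => ‖x‖ ^ p) ν)
    (θ : Metric.sphere (0 : EuclideanSpace ℝ (Fin d)) 1) :
    Integrable (fun u => |quantileFn (μ.map (sphProj θ)) u - quantileFn (ν.map (sphProj θ)) u| ^ p)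
      (volume.restrict (Ioo (0:ℝ) 1)) := by
  refine (Qm_diff_int μ ν hp hμ hν θ).congr ?_
  refine (ae_restrict_iff' measurableSet_Ioo).mpr (Eventually.of_forall (fun u hu => ?_))
  simp only [Qm_eq_on _ hu]

lemma WpPow_proj_eq (hp : 1 ≤ p) (hμ : Integrable (fun x => ‖x‖ ^ p) μ)
    (hν : Integrable (fun x => ‖x‖ ^ p) ν)
    (θ : Metric.sphere (0 : EuclideanSpace ℝ (Fin d)) 1) :
    WpPow p (μ.map (sphProj θ)) (ν.map (sphProj θ))
      = ∫ u in Ioo (0:ℝ) 1,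
          |quantileFn (μ.map (sphProj θ)) u - quantileFn (ν.map (sphProj θ)) u| ^ p := by
  haveI := mapProj_prob μ θ
  haveI := mapProj_prob ν θ
  exact le_antisymm (WpPow_le_quantile_integral _ _ hp)
    (quantile_integral_le_WpPow _ _ hp (moment_proj μ hp hμ θ) (moment_proj ν hp hν θ))

lemma WpPow_proj_bound (hp : 1 ≤ p) (hμ : Integrable (fun x => ‖x‖ ^ p) μ)
    (hν : Integrable (fun x => ‖x‖ ^ p) ν)
    (θ : Metric.sphere (0 : EuclideanSpace ℝ (Fin d)) 1) :
    WpPow p (μ.map (sphProj θ)) (ν.map (sphProj θ))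
      ≤ 2 ^ p * ((∫ y, ‖y‖ ^ p ∂μ) + ∫ y, ‖y‖ ^ p ∂ν) := by
  haveI := mapProj_prob μ θ
  haveI := mapProj_prob ν θ
  rw [WpPow_proj_eq μ ν hp hμ hν θ]
  have h1 : ∫ u in Ioo (0:ℝ) 1,
      |quantileFn (μ.map (sphProj θ)) u - quantileFn (ν.map (sphProj θ)) u| ^ p
      = ∫ u in Ioo (0:ℝ) 1, |Qm (μ.map (sphProj θ)) u - Qm (ν.map (sphProj θ)) u| ^ p :=
    setIntegral_congr_fun measurableSet_Ioo (fun u hu => by simp only [Qm_eq_on _ hu])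
  rw [h1]
  calc ∫ u in Ioo (0:ℝ) 1, |Qm (μ.map (sphProj θ)) u - Qm (ν.map (sphProj θ)) u| ^ p
      ≤ ∫ u in Ioo (0:ℝ) 1,
          2 ^ p * (|Qm (μ.map (sphProj θ)) u| ^ p + |Qm (ν.map (sphProj θ)) u| ^ p) := by
        refine integral_mono (Qm_diff_int μ ν hp hμ hν θ)
          (((Qm_moment_int μ hp hμ θ).add (Qm_moment_int ν hp hν θ)).const_mul (2 ^ p))
          (fun u => abs_rpow_le hp _ _)
    _ = 2 ^ p * ((∫ u in Ioo (0:ℝ) 1, |Qm (μ.map (sphProj θ)) u| ^ p)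
          + ∫ u in Ioo (0:ℝ) 1, |Qm (ν.map (sphProj θ)) u| ^ p) := by
        rw [integral_const_mul, integral_add (Qm_moment_int μ hp hμ θ) (Qm_moment_int ν hp hν θ)]
    _ ≤ 2 ^ p * ((∫ y, ‖y‖ ^ p ∂μ) + ∫ y, ‖y‖ ^ p ∂ν) := by
        apply mul_le_mul_of_nonneg_left _ (Real.rpow_nonneg (by norm_num) p)
        rw [integral_Qm_moment μ hp θ, integral_Qm_moment ν hp θ]
        exact add_le_add (integral_abs_rpow_proj_le μ hp hμ θ)
          (integral_abs_rpow_proj_le ν hp hν θ)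

lemma integrable_WpPow_proj (hp : 1 ≤ p) (hμ : Integrable (fun x => ‖x‖ ^ p) μ)
    (hν : Integrable (fun x => ‖x‖ ^ p) ν) :
    Integrable (fun θ => WpPow p (μ.map (sphProj θ)) (ν.map (sphProj θ)))
      (uniformSphere d) := by
  haveI := uniformSphere_finite d
  have habs : Continuous fun x : ℝ => |x| ^ p :=
    continuous_abs.rpow_const (fun _ => Or.inr (by linarith))
  -- strong measurability of the quantile cost
  have hjm : StronglyMeasurable (fun θ : Metric.sphere (0 : EuclideanSpace ℝ (Fin d)) 1 =>
      ∫ u in Ioo (0:ℝ) 1, |Qm (μ.map (sphProj θ)) u - Qm (ν.map (sphProj θ)) u| ^ p) := by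
    have hFmeas : StronglyMeasurable (fun w : (Metric.sphere (0 : EuclideanSpace ℝ (Fin d)) 1)
        × ℝ => |Qm (μ.map (sphProj w.1)) w.2 - Qm (ν.map (sphProj w.1)) w.2| ^ p) :=
      ((habs.measurable.comp ((measurable_qm2 μ).sub (measurable_qm2 ν)))).stronglyMeasurable
    exact hFmeas.integral_prod_right'
  have heqθ : ∀ θ : Metric.sphere (0 : EuclideanSpace ℝ (Fin d)) 1,
      WpPow p (μ.map (sphProj θ)) (ν.map (sphProj θ))
        = ∫ u in Ioo (0:ℝ) 1, |Qm (μ.map (sphProj θ)) u - Qm (ν.map (sphProj θ)) u| ^ p := by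
    intro θ
    rw [WpPow_proj_eq μ ν hp hμ hν θ]
    exact setIntegral_congr_fun measurableSet_Ioo
      (fun u hu => by simp only [Qm_eq_on _ hu])
  have hint2 : Integrable (fun θ : Metric.sphere (0 : EuclideanSpace ℝ (Fin d)) 1 =>
      ∫ u in Ioo (0:ℝ) 1, |Qm (μ.map (sphProj θ)) u - Qm (ν.map (sphProj θ)) u| ^ p)
      (uniformSphere d) := by
    refine Integrable.mono' (integrable_const (2 ^ p * ((∫ y, ‖y‖ ^ p ∂μ) + ∫ y, ‖y‖ ^ p ∂ν)))
      hjm.aestronglyMeasurable ?_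
    filter_upwards with θ
    rw [← heqθ θ, Real.norm_eq_abs, abs_of_nonneg (WpPow_nonneg' _ _)]
    exact WpPow_proj_bound μ ν hp hμ hν θ
  exact hint2.congr (Eventually.of_forall (fun θ => (heqθ θ).symm))

end PerTheta

section Jensen

lemma convexOn_abs_rpow {p : ℝ} (hp : 1 ≤ p) : ConvexOn ℝ univ fun x : ℝ => |x| ^ p := by
  have habs : ConvexOn ℝ univ (fun x : ℝ => |x|) := by
    have h := convexOn_univ_norm (E := ℝ)
    exact h
  have himg : (fun x : ℝ => |x|) '' univ = Ici 0 := by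
    ext y
    constructor
    · rintro ⟨x, -, rfl⟩
      exact abs_nonneg x
    · intro hy
      exact ⟨y, mem_univ y, abs_of_nonneg hy⟩
  have hmono : MonotoneOn (fun x : ℝ => x ^ p) ((fun x : ℝ => |x|) '' univ) := by
    rw [himg]
    intro a ha b _ hab
    exact Real.rpow_le_rpow ha hab (by linarith)
  have hg : ConvexOn ℝ ((fun x : ℝ => |x|) '' univ) (fun x : ℝ => x ^ p) := by
    rw [himg]
    exact convexOn_rpow hp
  exact hg.comp habs hmono

lemma abs_rpow_sum_le {p : ℝ} (hp : 1 ≤ p) {K : ℕ} (π : Fin K → ℝ) (hπ : ∀ k, 0 ≤ π k)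
    (hπs : ∑ k, π k = 1) (a : Fin K → ℝ) :
    |∑ k, π k * a k| ^ p ≤ ∑ k, π k * |a k| ^ p := by
  have h := (convexOn_abs_rpow hp).map_sum_le (t := Finset.univ) (w := π) (p := a)
    (fun k _ => hπ k) hπs (fun k _ => mem_univ _)
  simpa [smul_eq_mul] using h

end Jensen

section Final

variable {d K : ℕ} {p : ℝ}

/-- Pointwise (in `θ`) barycenter stability bound. -/
lemma pointwise_bound (hp : 1 ≤ p)
    (F F' : Fin K → Measure (EuclideanSpace ℝ (Fin d)))
    [∀ k, IsProbabilityMeasure (F k)] [∀ k, IsProbabilityMeasure (F' k)]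
    (hF : ∀ k, Integrable (fun x => ‖x‖ ^ p) (F k))
    (hF' : ∀ k, Integrable (fun x => ‖x‖ ^ p) (F' k))
    (π : Fin K → ℝ) (hπ : ∀ k, 0 ≤ π k) (hπs : ∑ k, π k = 1)
    (Fbar Fbar' : Measure (EuclideanSpace ℝ (Fin d)))
    [IsProbabilityMeasure Fbar] [IsProbabilityMeasure Fbar']
    (θ : Metric.sphere (0 : EuclideanSpace ℝ (Fin d)) 1)
    (h1 : ∀ t ∈ Ioo (0:ℝ) 1,
      quantileFn (Fbar.map (sphProj θ)) t = ∑ k, π k * quantileFn ((F k).map (sphProj θ)) t)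
    (h2 : ∀ t ∈ Ioo (0:ℝ) 1,
      quantileFn (Fbar'.map (sphProj θ)) t = ∑ k, π k * quantileFn ((F' k).map (sphProj θ)) t) :
    WpPow p (Fbar.map (sphProj θ)) (Fbar'.map (sphProj θ))
      ≤ ∑ k, π k * WpPow p ((F k).map (sphProj θ)) ((F' k).map (sphProj θ)) := by
  haveI := mapProj_prob Fbar θ
  haveI := mapProj_prob Fbar' θ
  haveI : ∀ k, IsProbabilityMeasure ((F k).map (sphProj θ)) := fun k => mapProj_prob (F k) θ
  haveI : ∀ k, IsProbabilityMeasure ((F' k).map (sphProj θ)) := fun k => mapProj_prob (F' k) θ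
  calc WpPow p (Fbar.map (sphProj θ)) (Fbar'.map (sphProj θ))
      ≤ ∫ u in Ioo (0:ℝ) 1,
          |quantileFn (Fbar.map (sphProj θ)) u - quantileFn (Fbar'.map (sphProj θ)) u| ^ p :=
        WpPow_le_quantile_integral _ _ hp
    _ = ∫ u in Ioo (0:ℝ) 1, |∑ k, π k * (quantileFn ((F k).map (sphProj θ)) u
          - quantileFn ((F' k).map (sphProj θ)) u)| ^ p := by
        refine setIntegral_congr_fun measurableSet_Ioo (fun u hu => ?_)
        rw [h1 u hu, h2 u hu, ← Finset.sum_sub_distrib]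
        congr 2
        refine Finset.sum_congr rfl (fun k _ => ?_)
        ring
    _ ≤ ∫ u in Ioo (0:ℝ) 1, ∑ k, π k * |quantileFn ((F k).map (sphProj θ)) u
          - quantileFn ((F' k).map (sphProj θ)) u| ^ p := by
        refine integral_mono_of_nonneg
          (Eventually.of_forall (fun u => Real.rpow_nonneg (abs_nonneg _) p)) ?_
          (Eventually.of_forall (fun u => abs_rpow_sum_le hp π hπ hπs _))
        exact integrable_finset_sum _ (fun k _ =>
          (quantile_diff_int (F k) (F' k) hp (hF k) (hF' k) θ).const_mul (π k))
    _ = ∑ k, π k * ∫ u in Ioo (0:ℝ) 1, |quantileFn ((F k).map (sphProj θ)) u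
          - quantileFn ((F' k).map (sphProj θ)) u| ^ p := by
        rw [integral_finset_sum _ (fun k _ =>
          (quantile_diff_int (F k) (F' k) hp (hF k) (hF' k) θ).const_mul (π k))]
        exact Finset.sum_congr rfl (fun k _ => integral_const_mul _ _)
    _ = ∑ k, π k * WpPow p ((F k).map (sphProj θ)) ((F' k).map (sphProj θ)) := by
        refine Finset.sum_congr rfl (fun k _ => ?_)
        rw [WpPow_proj_eq (F k) (F' k) hp (hF k) (hF' k) θ]

/-- Stability of the sliced Wasserstein barycenter under perturbation of the marginals. -/
theorem swb_stability_marginals (d K : ℕ) (hd : 2 ≤ d) (hK : 2 ≤ K) (p : ℝ) (hp : 1 ≤ p)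
    (F F' : Fin K → Measure (EuclideanSpace ℝ (Fin d)))
    [∀ k, IsProbabilityMeasure (F k)] [∀ k, IsProbabilityMeasure (F' k)]
    (hF : ∀ k, Integrable (fun x => ‖x‖ ^ p) (F k))
    (hF' : ∀ k, Integrable (fun x => ‖x‖ ^ p) (F' k))
    (π : Fin K → ℝ) (hπ : ∀ k, 0 ≤ π k) (hπs : ∑ k, π k = 1)
    (Fbar Fbar' : Measure (EuclideanSpace ℝ (Fin d)))
    [IsProbabilityMeasure Fbar] [IsProbabilityMeasure Fbar']
    (hFbar : ∀ᵐ θ ∂(uniformSphere d), ∀ t ∈ Ioo (0:ℝ) 1,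
      quantileFn (Fbar.map (sphProj θ)) t = ∑ k, π k * quantileFn ((F k).map (sphProj θ)) t)
    (hFbar' : ∀ᵐ θ ∂(uniformSphere d), ∀ t ∈ Ioo (0:ℝ) 1,
      quantileFn (Fbar'.map (sphProj θ)) t = ∑ k, π k * quantileFn ((F' k).map (sphProj θ)) t) :
    SWpPow p Fbar Fbar' ≤ ∑ k, π k * SWpPow p (F k) (F' k) ∧
    ∑ k, π k * SWpPow p (F k) (F' k) ≤
      Finset.univ.sup' (Finset.univ_nonempty_iff.mpr ⟨⟨0, by omega⟩⟩) (fun k => SWpPow p (F k) (F' k)) := by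
  haveI := uniformSphere_finite d
  have hgint : ∀ k, Integrable
      (fun θ => WpPow p ((F k).map (sphProj θ)) ((F' k).map (sphProj θ))) (uniformSphere d) :=
    fun k => integrable_WpPow_proj (F k) (F' k) hp (hF k) (hF' k)
  constructor
  · have key : SWpPow p Fbar Fbar' ≤ ∫ θ, (∑ k, π k * WpPow p ((F k).map (sphProj θ))
        ((F' k).map (sphProj θ))) ∂(uniformSphere d) := by
      rw [SWpPow]
      refine integral_mono_of_nonneg (Eventually.of_forall (fun θ => WpPow_nonneg' _ _))
        (integrable_finset_sum _ (fun k _ => (hgint k).const_mul (π k))) ?_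
      filter_upwards [hFbar, hFbar'] with θ h1 h2
      exact pointwise_bound hp F F' hF hF' π hπ hπs Fbar Fbar' θ h1 h2
    refine le_trans key ?_
    rw [integral_finset_sum _ (fun k _ => (hgint k).const_mul (π k))]
    refine le_of_eq (Finset.sum_congr rfl (fun k _ => ?_))
    rw [integral_const_mul]
    rfl
  · set M := Finset.univ.sup' (Finset.univ_nonempty_iff.mpr ⟨⟨0, by omega⟩⟩)
      (fun k => SWpPow p (F k) (F' k)) with hM
    calc ∑ k, π k * SWpPow p (F k) (F' k) ≤ ∑ k, π k * M := by
          apply Finset.sum_le_sum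
          intro i _
          exact mul_le_mul_of_nonneg_left
            (Finset.le_sup' (fun k => SWpPow p (F k) (F' k)) (Finset.mem_univ i)) (hπ i)
      _ = M := by rw [← Finset.sum_mul, hπs, one_mul]

end Final
end

section
/- Let p ≥ 1 and d ≥ 2. For probability measures G_1, G_2 on ℝ^d supported in a common compact set of diameter R, there is a constant C_{p,R} depending only on p and R such that |SW_p^p(G_1, G) − SW_p^p(G_2, Ĝ)| ≤ C_{p,R} · (SW_1(G_1, G_2) + SW_1(G, Ĝ)) for any probability measures G, Ĝ supported in the same compact set. -/
open MeasureTheory Set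

open ProbabilityTheory

noncomputable def Wcost (q : ℝ) (γ : Measure (ℝ × ℝ)) : ℝ := ∫ z, ‖z.1 - z.2‖ ^ q ∂γ

def cset (q : ℝ) (μ ν : Measure ℝ) : Set ℝ :=
  {c : ℝ | ∃ γ : Measure (ℝ × ℝ),
    γ.map Prod.fst = μ ∧ γ.map Prod.snd = ν ∧ c = ∫ z, ‖z.1 - z.2‖ ^ q ∂γ}

lemma wpPow_eq (q : ℝ) (μ ν : Measure ℝ) : WpPow q μ ν = sInf (cset q μ ν) := rfl


lemma continuous_rpow_const' {q : ℝ} (hq : 0 ≤ q) : Continuous fun x : ℝ => x ^ q :=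
  continuous_iff_continuousAt.2 fun x => Real.continuousAt_rpow_const x q (Or.inr hq)

lemma continuous_costFn {q : ℝ} (hq : 0 ≤ q) :
    Continuous fun z : ℝ × ℝ => ‖z.1 - z.2‖ ^ q :=
  (continuous_rpow_const' hq).comp ((continuous_fst.sub continuous_snd).norm)

lemma cset_nonneg {q : ℝ} {μ ν : Measure ℝ} {c : ℝ} (hc : c ∈ cset q μ ν) : 0 ≤ c := by
  obtain ⟨γ, -, -, rfl⟩ := hc
  exact integral_nonneg fun z => Real.rpow_nonneg (norm_nonneg _) _

lemma cset_bddBelow (q : ℝ) (μ ν : Measure ℝ) : BddBelow (cset q μ ν) :=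
  ⟨0, fun c hc => cset_nonneg hc⟩

lemma cset_nonempty (q : ℝ) (μ ν : Measure ℝ) [IsProbabilityMeasure μ]
    [IsProbabilityMeasure ν] : (cset q μ ν).Nonempty := by
  refine ⟨_, μ.prod ν, ?_, ?_, rfl⟩
  · exact Measure.fst_prod
  · exact Measure.snd_prod

lemma wpPow_nonneg (q : ℝ) (μ ν : Measure ℝ) : 0 ≤ WpPow q μ ν :=
  Real.sInf_nonneg fun _ hc => cset_nonneg hc

lemma wpPow_le_of_mem {q : ℝ} {μ ν : Measure ℝ} {c : ℝ} (hc : c ∈ cset q μ ν) :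
    WpPow q μ ν ≤ c := csInf_le (cset_bddBelow q μ ν) hc

/-- membership in cset is symmetric under swapping. -/
lemma cset_swap {q : ℝ} (hq : 0 ≤ q) {μ ν : Measure ℝ} {c : ℝ} (hc : c ∈ cset q μ ν) :
    c ∈ cset q ν μ := by
  obtain ⟨γ, h1, h2, rfl⟩ := hc
  refine ⟨γ.map Prod.swap, ?_, ?_, ?_⟩
  · rw [Measure.map_map measurable_fst measurable_swap]
    exact h2
  · rw [Measure.map_map measurable_snd measurable_swap]
    exact h1
  · rw [integral_map measurable_swap.aemeasurable]
    · simp only [Prod.fst_swap, Prod.snd_swap]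
      congr 1
      ext z
      rw [norm_sub_rev]
    · exact (continuous_costFn hq).aestronglyMeasurable

lemma wpPow_comm {q : ℝ} (hq : 0 ≤ q) (μ ν : Measure ℝ) : WpPow q μ ν = WpPow q ν μ := by
  rw [wpPow_eq, wpPow_eq]
  congr 1
  ext c
  exact ⟨fun h => cset_swap hq h, fun h => cset_swap hq h⟩

/-- Mean value estimate for rpow on `[0,R]`. -/
lemma rpow_sub_rpow_le {p R a b : ℝ} (hp : 1 ≤ p) (hR : 0 ≤ R)
    (ha : a ∈ Icc 0 R) (hb : b ∈ Icc 0 R) :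
    a ^ p ≤ b ^ p + p * R ^ (p - 1) * |a - b| := by
  have key : ‖a ^ p - b ^ p‖ ≤ p * R ^ (p - 1) * ‖a - b‖ := by
    refine Convex.norm_image_sub_le_of_norm_hasDerivWithin_le
      (f := fun x : ℝ => x ^ p) (f' := fun x : ℝ => p * x ^ (p - 1)) (s := Icc 0 R)
      (fun x _ => (Real.hasDerivAt_rpow_const (Or.inr hp)).hasDerivWithinAt)
      (fun x hx => ?_) (convex_Icc 0 R) hb ha
    have hx0 : (0:ℝ) ≤ x := hx.1
    have h1 : (0:ℝ) ≤ p * x ^ (p - 1) := by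
      have := Real.rpow_nonneg hx0 (p - 1)
      nlinarith
    rw [Real.norm_eq_abs, abs_of_nonneg h1]
    have h2 : x ^ (p - 1) ≤ R ^ (p - 1) :=
      Real.rpow_le_rpow hx0 hx.2 (by linarith)
    nlinarith
  have := (abs_le.1 (by rwa [Real.norm_eq_abs, Real.norm_eq_abs] at key)).2
  linarith

/-- The gluing marginal computation. -/
lemma glue_fst {α β X Y : Type*} [MeasurableSpace α] [MeasurableSpace β]
    [MeasurableSpace X] [MeasurableSpace Y]
    (μ : Measure (α × β)) [SFinite μ] (κ1 : Kernel α X) [IsMarkovKernel κ1]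
    (κ2 : Kernel β Y) [IsMarkovKernel κ2] :
    (μ ⊗ₘ ((κ1.comap Prod.fst measurable_fst) ×ₖ (κ2.comap Prod.snd measurable_snd))).map
      (fun w => (w.1.1, w.2.1)) = μ.fst ⊗ₘ κ1 := by
  ext s hs
  have hmf : Measurable fun w : (α × β) × (X × Y) => (w.1.1, w.2.1) :=
    (measurable_fst.fst.prodMk measurable_snd.fst)
  rw [Measure.map_apply hmf hs, Measure.compProd_apply (hmf hs),
    Measure.compProd_apply hs]
  rw [Measure.fst, MeasureTheory.lintegral_map ?_ measurable_fst]
  · refine lintegral_congr fun ab => ?_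
    have : (Prod.mk ab ⁻¹' ((fun w : (α × β) × (X × Y) => (w.1.1, w.2.1)) ⁻¹' s))
        = (Prod.mk ab.1 ⁻¹' s) ×ˢ univ := by
      ext xy; simp [Set.mem_preimage, Set.mem_prod]
    rw [this, Kernel.prod_apply, Measure.prod_prod, Kernel.comap_apply, Kernel.comap_apply,
      measure_univ, mul_one]
  · exact Kernel.measurable_kernel_prodMk_left hs

lemma glue_snd {α β X Y : Type*} [MeasurableSpace α] [MeasurableSpace β]
    [MeasurableSpace X] [MeasurableSpace Y]
    (μ : Measure (α × β)) [SFinite μ] (κ1 : Kernel α X) [IsMarkovKernel κ1]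
    (κ2 : Kernel β Y) [IsMarkovKernel κ2] :
    (μ ⊗ₘ ((κ1.comap Prod.fst measurable_fst) ×ₖ (κ2.comap Prod.snd measurable_snd))).map
      (fun w => (w.1.2, w.2.2)) = μ.snd ⊗ₘ κ2 := by
  ext s hs
  have hmf : Measurable fun w : (α × β) × (X × Y) => (w.1.2, w.2.2) :=
    (measurable_fst.snd.prodMk measurable_snd.snd)
  rw [Measure.map_apply hmf hs, Measure.compProd_apply (hmf hs),
    Measure.compProd_apply hs]
  rw [Measure.snd, MeasureTheory.lintegral_map ?_ measurable_snd]
  · refine lintegral_congr fun ab => ?_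
    have : (Prod.mk ab ⁻¹' ((fun w : (α × β) × (X × Y) => (w.1.2, w.2.2)) ⁻¹' s))
        = univ ×ˢ (Prod.mk ab.2 ⁻¹' s) := by
      ext xy; simp [Set.mem_preimage, Set.mem_prod]
    rw [this, Kernel.prod_apply, Measure.prod_prod, Kernel.comap_apply, Kernel.comap_apply,
      measure_univ, one_mul]
  · exact Kernel.measurable_kernel_prodMk_left hs

lemma ae_mem_of_map {Ω' : Type*} [MeasurableSpace Ω'] (m : Measure Ω') {f : Ω' → ℝ}
    (hf : Measurable f) {K : Set ℝ} (hK : MeasurableSet K) {μ1 : Measure ℝ}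
    (h : m.map f = μ1) (h0 : μ1 Kᶜ = 0) : ∀ᵐ w ∂m, f w ∈ K := by
  rw [ae_iff]
  have : {w | ¬ f w ∈ K} = f ⁻¹' Kᶜ := rfl
  rw [this, ← Measure.map_apply hf hK.compl, h, h0]

lemma map_univ_eq {E F : Type*} [MeasurableSpace E] [MeasurableSpace F]
    {γ : Measure E} {f : E → F} (hf : Measurable f) {μ : Measure F}
    [IsProbabilityMeasure μ] (h : γ.map f = μ) : IsProbabilityMeasure γ := by
  constructor
  have := Measure.map_apply hf MeasurableSet.univ (μ := γ)
  rw [h] at this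
  simpa using this.symm

lemma glue_bound (p R : ℝ) (hp : 1 ≤ p) (hR : 0 ≤ R) (K : Set ℝ) (hK : IsCompact K)
    (hdiam : Metric.diam K ≤ R)
    (α β α' β' : Measure ℝ) [IsProbabilityMeasure α] [IsProbabilityMeasure β]
    [IsProbabilityMeasure α'] [IsProbabilityMeasure β']
    (hαK : α Kᶜ = 0) (hβK : β Kᶜ = 0) (hα'K : α' Kᶜ = 0) (hβ'K : β' Kᶜ = 0)
    {c' c1 c2 : ℝ} (hc' : c' ∈ cset p α' β') (hc1 : c1 ∈ cset 1 α α')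
    (hc2 : c2 ∈ cset 1 β β') :
    WpPow p α β ≤ c' + p * R ^ (p - 1) * (c1 + c2) := by
  have hp0 : (0:ℝ) ≤ p := by linarith
  obtain ⟨γ', hfst', hsnd', rfl⟩ := hc'
  obtain ⟨γ1, hfst1, hsnd1, rfl⟩ := hc1
  obtain ⟨γ2, hfst2, hsnd2, rfl⟩ := hc2
  haveI : IsProbabilityMeasure γ' := map_univ_eq measurable_fst hfst'
  haveI : IsProbabilityMeasure γ1 := map_univ_eq measurable_fst hfst1
  haveI : IsProbabilityMeasure γ2 := map_univ_eq measurable_fst hfst2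
  set γ1s : Measure (ℝ × ℝ) := γ1.map Prod.swap with hγ1s
  set γ2s : Measure (ℝ × ℝ) := γ2.map Prod.swap with hγ2s
  haveI : IsProbabilityMeasure γ1s := Measure.isProbabilityMeasure_map measurable_swap.aemeasurable
  haveI : IsProbabilityMeasure γ2s := Measure.isProbabilityMeasure_map measurable_swap.aemeasurable
  set κX := γ1s.condKernel with hκX
  set κY := γ2s.condKernel with hκY
  set κ := ((κX.comap Prod.fst measurable_fst) ×ₖ (κY.comap Prod.snd measurable_snd)) with hκ
  set Ω := γ' ⊗ₘ κ with hΩ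
  haveI : IsProbabilityMeasure Ω := by rw [hΩ]; infer_instance
  -- marginal computations
  have hγ1s_fst : γ1s.fst = α' := by
    rw [hγ1s, Measure.fst, Measure.map_map measurable_fst measurable_swap]
    exact hsnd1
  have hγ2s_fst : γ2s.fst = β' := by
    rw [hγ2s, Measure.fst, Measure.map_map measurable_fst measurable_swap]
    exact hsnd2
  have hγ'_fst : γ'.fst = α' := hfst'
  have hγ'_snd : γ'.snd = β' := hsnd'
  have hL1 : Ω.map (fun w => (w.1.1, w.2.1)) = γ1s := by
    rw [hΩ, hκ, glue_fst, hγ'_fst, ← hγ1s_fst, hκX]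
    exact γ1s.disintegrate _
  have hL2 : Ω.map (fun w => (w.1.2, w.2.2)) = γ2s := by
    rw [hΩ, hκ, glue_snd, hγ'_snd, ← hγ2s_fst, hκY]
    exact γ2s.disintegrate _
  have hL3 : Ω.map Prod.fst = γ' := Measure.fst_compProd γ' κ
  have hm11 : Measurable fun w : (ℝ×ℝ)×(ℝ×ℝ) => (w.1.1, w.2.1) :=
    measurable_fst.fst.prodMk measurable_snd.fst
  have hm22 : Measurable fun w : (ℝ×ℝ)×(ℝ×ℝ) => (w.1.2, w.2.2) :=
    measurable_fst.snd.prodMk measurable_snd.snd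
  have hmν : Measurable fun w : (ℝ×ℝ)×(ℝ×ℝ) => (w.2.1, w.2.2) :=
    measurable_snd.fst.prodMk measurable_snd.snd
  -- coordinate marginals
  have hx : Ω.map (fun w => w.2.1) = α := by
    have : Ω.map (fun w => w.2.1)
        = (Ω.map (fun w => (w.1.1, w.2.1))).map Prod.snd := by
      rw [Measure.map_map measurable_snd hm11]; rfl
    rw [this, hL1, hγ1s, Measure.map_map measurable_snd measurable_swap]
    exact hfst1
  have hy : Ω.map (fun w => w.2.2) = β := by
    have : Ω.map (fun w => w.2.2)
        = (Ω.map (fun w => (w.1.2, w.2.2))).map Prod.snd := by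
      rw [Measure.map_map measurable_snd hm22]; rfl
    rw [this, hL2, hγ2s, Measure.map_map measurable_snd measurable_swap]
    exact hfst2
  have hx' : Ω.map (fun w => w.1.1) = α' := by
    have : Ω.map (fun w => w.1.1) = (Ω.map Prod.fst).map Prod.fst := by
      rw [Measure.map_map measurable_fst measurable_fst]; rfl
    rw [this, hL3]; exact hfst'
  have hy' : Ω.map (fun w => w.1.2) = β' := by
    have : Ω.map (fun w => w.1.2) = (Ω.map Prod.fst).map Prod.snd := by
      rw [Measure.map_map measurable_snd measurable_fst]; rfl
    rw [this, hL3]; exact hsnd'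
  -- a.e. membership in K
  have hKm := hK.measurableSet
  have ae_x : ∀ᵐ w ∂Ω, (fun w : (ℝ×ℝ)×(ℝ×ℝ) => w.2.1) w ∈ K :=
    ae_mem_of_map Ω measurable_snd.fst hKm hx hαK
  have ae_y : ∀ᵐ w ∂Ω, (fun w : (ℝ×ℝ)×(ℝ×ℝ) => w.2.2) w ∈ K :=
    ae_mem_of_map Ω measurable_snd.snd hKm hy hβK
  have ae_x' : ∀ᵐ w ∂Ω, (fun w : (ℝ×ℝ)×(ℝ×ℝ) => w.1.1) w ∈ K :=
    ae_mem_of_map Ω measurable_fst.fst hKm hx' hα'K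
  have ae_y' : ∀ᵐ w ∂Ω, (fun w : (ℝ×ℝ)×(ℝ×ℝ) => w.1.2) w ∈ K :=
    ae_mem_of_map Ω measurable_fst.snd hKm hy' hβ'K
  have hbd : Bornology.IsBounded K := hK.isBounded
  have habs : ∀ u v : ℝ, u ∈ K → v ∈ K → ‖u - v‖ ∈ Icc 0 R := by
    intro u v hu hv
    refine ⟨norm_nonneg _, ?_⟩
    have := Metric.dist_le_diam_of_mem hbd hu hv
    rw [Real.dist_eq] at this
    rw [Real.norm_eq_abs]
    linarith
  -- the four integrands
  set c : ℝ := p * R ^ (p - 1) with hc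
  have hc0 : 0 ≤ c := by
    have : (0:ℝ) ≤ R ^ (p-1) := Real.rpow_nonneg hR _
    positivity
  set F0 : ((ℝ×ℝ)×(ℝ×ℝ)) → ℝ := fun w => ‖w.2.1 - w.2.2‖ ^ p with hF0
  set F1 : ((ℝ×ℝ)×(ℝ×ℝ)) → ℝ := fun w => ‖w.1.1 - w.1.2‖ ^ p with hF1
  set F2 : ((ℝ×ℝ)×(ℝ×ℝ)) → ℝ := fun w => ‖w.2.1 - w.1.1‖ with hF2
  set F3 : ((ℝ×ℝ)×(ℝ×ℝ)) → ℝ := fun w => ‖w.2.2 - w.1.2‖ with hF3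
  have hcont0 : Continuous F0 := (continuous_costFn hp0).comp
    ((continuous_snd.fst).prodMk (continuous_snd.snd))
  have hcont1 : Continuous F1 := (continuous_costFn hp0).comp
    ((continuous_fst.fst).prodMk (continuous_fst.snd))
  have hcont2 : Continuous F2 := ((continuous_snd.fst).sub (continuous_fst.fst)).norm
  have hcont3 : Continuous F3 := ((continuous_snd.snd).sub (continuous_fst.snd)).norm
  -- a.e. bounds
  have aeb0 : ∀ᵐ w ∂Ω, ‖F0 w‖ ≤ R ^ p := by
    filter_upwards [ae_x, ae_y] with w h1 h2
    have := habs _ _ h1 h2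
    rw [hF0, Real.norm_eq_abs, abs_of_nonneg (Real.rpow_nonneg (norm_nonneg _) _)]
    exact Real.rpow_le_rpow this.1 this.2 hp0
  have aeb1 : ∀ᵐ w ∂Ω, ‖F1 w‖ ≤ R ^ p := by
    filter_upwards [ae_x', ae_y'] with w h1 h2
    have := habs _ _ h1 h2
    rw [hF1, Real.norm_eq_abs, abs_of_nonneg (Real.rpow_nonneg (norm_nonneg _) _)]
    exact Real.rpow_le_rpow this.1 this.2 hp0
  have aeb2 : ∀ᵐ w ∂Ω, ‖F2 w‖ ≤ R := by
    filter_upwards [ae_x, ae_x'] with w h1 h2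
    rw [hF2, norm_norm]
    exact (habs _ _ h1 h2).2
  have aeb3 : ∀ᵐ w ∂Ω, ‖F3 w‖ ≤ R := by
    filter_upwards [ae_y, ae_y'] with w h1 h2
    rw [hF3, norm_norm]
    exact (habs _ _ h1 h2).2
  have int0 : Integrable F0 Ω := (integrable_const (R ^ p)).mono'
    hcont0.aestronglyMeasurable aeb0
  have int1 : Integrable F1 Ω := (integrable_const (R ^ p)).mono'
    hcont1.aestronglyMeasurable aeb1
  have int2 : Integrable F2 Ω := (integrable_const R).mono'
    hcont2.aestronglyMeasurable aeb2
  have int3 : Integrable F3 Ω := (integrable_const R).mono'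
    hcont3.aestronglyMeasurable aeb3
  -- pointwise inequality
  have haept : ∀ᵐ w ∂Ω, F0 w ≤ F1 w + c * (F2 w + F3 w) := by
    filter_upwards [ae_x, ae_y, ae_x', ae_y'] with w h1 h2 h3 h4
    have haK := habs _ _ h1 h2
    have hbK := habs _ _ h3 h4
    have key := rpow_sub_rpow_le hp hR haK hbK
    have htri : |‖w.2.1 - w.2.2‖ - ‖w.1.1 - w.1.2‖| ≤ F2 w + F3 w := by
      have h5 : |‖w.2.1 - w.2.2‖ - ‖w.1.1 - w.1.2‖|
          ≤ ‖(w.2.1 - w.2.2) - (w.1.1 - w.1.2)‖ := abs_norm_sub_norm_le _ _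
      have h6 : ‖(w.2.1 - w.2.2) - (w.1.1 - w.1.2)‖
          ≤ ‖w.2.1 - w.1.1‖ + ‖w.2.2 - w.1.2‖ := by
        have : (w.2.1 - w.2.2) - (w.1.1 - w.1.2) = (w.2.1 - w.1.1) - (w.2.2 - w.1.2) := by
          ring
        rw [this]
        exact norm_sub_le _ _
      exact le_trans h5 h6
    have hmul : c * |‖w.2.1 - w.2.2‖ - ‖w.1.1 - w.1.2‖| ≤ c * (F2 w + F3 w) :=
      mul_le_mul_of_nonneg_left htri hc0
    rw [hF0, hF1]
    calc ‖w.2.1 - w.2.2‖ ^ p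
        ≤ ‖w.1.1 - w.1.2‖ ^ p + c * |‖w.2.1 - w.2.2‖ - ‖w.1.1 - w.1.2‖| := key
      _ ≤ ‖w.1.1 - w.1.2‖ ^ p + c * (F2 w + F3 w) := by linarith
  -- integral identities
  have costmeasP : AEStronglyMeasurable (fun z : ℝ×ℝ => ‖z.1 - z.2‖ ^ p)
      (Ω.map (fun w => (w.2.1, w.2.2))) := (continuous_costFn hp0).aestronglyMeasurable
  have hEq0 : ∫ z, ‖z.1 - z.2‖ ^ p ∂(Ω.map (fun w => (w.2.1, w.2.2))) = ∫ w, F0 w ∂Ω :=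
    integral_map hmν.aemeasurable costmeasP
  have hEq1 : ∫ w, F1 w ∂Ω = ∫ z, ‖z.1 - z.2‖ ^ p ∂γ' := by
    rw [← hL3, integral_map measurable_fst.aemeasurable
      (continuous_costFn hp0).aestronglyMeasurable]
  have hEq2 : ∫ w, F2 w ∂Ω = ∫ z, ‖z.1 - z.2‖ ^ (1:ℝ) ∂γ1 := by
    have : ∫ w, F2 w ∂Ω = ∫ z : ℝ×ℝ, ‖z.2 - z.1‖ ∂γ1s := by
      rw [← hL1, integral_map hm11.aemeasurable]
      exact ((continuous_snd.sub continuous_fst).norm).aestronglyMeasurable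
    rw [this, hγ1s, integral_map measurable_swap.aemeasurable (f := fun z : ℝ × ℝ => ‖z.2 - z.1‖)
      ((continuous_snd.sub continuous_fst).norm).aestronglyMeasurable]
    simp [Real.rpow_one]
  have hEq3 : ∫ w, F3 w ∂Ω = ∫ z, ‖z.1 - z.2‖ ^ (1:ℝ) ∂γ2 := by
    have : ∫ w, F3 w ∂Ω = ∫ z : ℝ×ℝ, ‖z.2 - z.1‖ ∂γ2s := by
      rw [← hL2, integral_map hm22.aemeasurable]
      exact ((continuous_snd.sub continuous_fst).norm).aestronglyMeasurable
    rw [this, hγ2s, integral_map measurable_swap.aemeasurable (f := fun z : ℝ × ℝ => ‖z.2 - z.1‖)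
      ((continuous_snd.sub continuous_fst).norm).aestronglyMeasurable]
    simp [Real.rpow_one]
  -- the new coupling is admissible
  have hmem : (∫ z, ‖z.1 - z.2‖ ^ p ∂(Ω.map (fun w => (w.2.1, w.2.2)))) ∈ cset p α β := by
    refine ⟨Ω.map (fun w => (w.2.1, w.2.2)), ?_, ?_, rfl⟩
    · rw [Measure.map_map measurable_fst hmν]; exact hx
    · rw [Measure.map_map measurable_snd hmν]; exact hy
  have step1 : WpPow p α β ≤ ∫ w, F0 w ∂Ω := by
    have := wpPow_le_of_mem hmem
    rwa [hEq0] at this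
  have step2 : ∫ w, F0 w ∂Ω ≤ ∫ w, F1 w + c * (F2 w + F3 w) ∂Ω := by
    refine integral_mono_ae int0 ?_ haept
    exact int1.add (((int2.add int3).const_mul c))
  have step3 : ∫ w, F1 w + c * (F2 w + F3 w) ∂Ω
      = (∫ w, F1 w ∂Ω) + c * ((∫ w, F2 w ∂Ω) + (∫ w, F3 w ∂Ω)) := by
    have hg : Integrable (fun w => c * (F2 w + F3 w)) Ω := (int2.add int3).const_mul c
    rw [integral_add int1 hg, MeasureTheory.integral_const_mul, integral_add int2 int3]
  rw [hEq1, hEq2, hEq3] at step3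
  calc WpPow p α β ≤ ∫ w, F0 w ∂Ω := step1
    _ ≤ ∫ w, F1 w + c * (F2 w + F3 w) ∂Ω := step2
    _ = _ := step3

lemma wpPow_key (p R : ℝ) (hp : 1 ≤ p) (hR : 0 < R) (K : Set ℝ) (hK : IsCompact K)
    (hdiam : Metric.diam K ≤ R)
    (α β α' β' : Measure ℝ) [IsProbabilityMeasure α] [IsProbabilityMeasure β]
    [IsProbabilityMeasure α'] [IsProbabilityMeasure β']
    (hαK : α Kᶜ = 0) (hβK : β Kᶜ = 0) (hα'K : α' Kᶜ = 0) (hβ'K : β' Kᶜ = 0) :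
    WpPow p α β ≤ WpPow p α' β' + p * R ^ (p - 1) * (WpPow 1 α α' + WpPow 1 β β') := by
  obtain ⟨c, hc⟩ : ∃ c : ℝ, c = p * R ^ (p - 1) := ⟨_, rfl⟩
  have hc0 : 0 < c := by
    rw [hc]
    have : (0:ℝ) < R ^ (p-1) := Real.rpow_pos_of_pos hR _
    have hp0 : (0:ℝ) < p := by linarith
    positivity
  rw [← hc]
  have base : ∀ c1 ∈ cset 1 α α', ∀ c2 ∈ cset 1 β β',
      WpPow p α β ≤ WpPow p α' β' + c * (c1 + c2) := by
    intro c1 hc1 c2 hc2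
    have h : WpPow p α β - c * (c1 + c2) ≤ sInf (cset p α' β') :=
      le_csInf (cset_nonempty p α' β') (fun c' hc' => by
        have := glue_bound p R hp hR.le K hK hdiam α β α' β' hαK hβK hα'K hβ'K hc' hc1 hc2
        rw [← hc] at this
        linarith)
    rw [wpPow_eq p α' β']
    linarith
  have step2 : ∀ c2 ∈ cset 1 β β',
      WpPow p α β ≤ WpPow p α' β' + c * (WpPow 1 α α' + c2) := by
    intro c2 hc2
    have h : (WpPow p α β - WpPow p α' β') / c - c2 ≤ sInf (cset 1 α α') :=
      le_csInf (cset_nonempty 1 α α') (fun c1 hc1 => by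
        have := base c1 hc1 c2 hc2
        rw [sub_le_iff_le_add, div_le_iff₀ hc0]
        linarith)
    rw [← wpPow_eq 1 α α'] at h
    have h3 : (WpPow p α β - WpPow p α' β') / c ≤ WpPow 1 α α' + c2 := by linarith
    rw [div_le_iff₀ hc0] at h3
    linarith
  have h : (WpPow p α β - WpPow p α' β') / c - WpPow 1 α α' ≤ sInf (cset 1 β β') :=
    le_csInf (cset_nonempty 1 β β') (fun c2 hc2 => by
      have := step2 c2 hc2
      rw [sub_le_iff_le_add, div_le_iff₀ hc0]
      linarith)
  rw [← wpPow_eq 1 β β'] at h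
  have h3 : (WpPow p α β - WpPow p α' β') / c ≤ WpPow 1 α α' + WpPow 1 β β' := by linarith
  rw [div_le_iff₀ hc0] at h3
  linarith

lemma wpPow_abs_key (p R : ℝ) (hp : 1 ≤ p) (hR : 0 < R) (K : Set ℝ) (hK : IsCompact K)
    (hdiam : Metric.diam K ≤ R)
    (α β α' β' : Measure ℝ) [IsProbabilityMeasure α] [IsProbabilityMeasure β]
    [IsProbabilityMeasure α'] [IsProbabilityMeasure β']
    (hαK : α Kᶜ = 0) (hβK : β Kᶜ = 0) (hα'K : α' Kᶜ = 0) (hβ'K : β' Kᶜ = 0) :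
    |WpPow p α β - WpPow p α' β'| ≤ p * R ^ (p - 1) * (WpPow 1 α α' + WpPow 1 β β') := by
  rw [abs_sub_le_iff]
  constructor
  · have := wpPow_key p R hp hR K hK hdiam α β α' β' hαK hβK hα'K hβ'K
    linarith
  · have := wpPow_key p R hp hR K hK hdiam α' β' α β hα'K hβ'K hαK hβK
    rw [wpPow_comm (by linarith : (0:ℝ) ≤ 1) α' α, wpPow_comm (by linarith : (0:ℝ) ≤ 1) β' β]
      at this
    linarith


instance uniformSphere_finite_s13 (d : ℕ) : IsFiniteMeasure (uniformSphere d) := by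
  constructor
  rw [uniformSphere]
  simp only [Measure.smul_apply, smul_eq_mul]
  set c := (volume : Measure (EuclideanSpace ℝ (Fin d))).toSphere Set.univ with hc
  have : c⁻¹ * c ≤ 1 := by
    rcases eq_or_ne c 0 with h | h
    · simp [h]
    · rcases eq_or_ne c ⊤ with h' | h'
      · simp [h']
      · rw [ENNReal.inv_mul_cancel h h']
  exact lt_of_le_of_lt this ENNReal.one_lt_top

lemma sphProj_cont {d : ℕ} (θ : Metric.sphere (0 : EuclideanSpace ℝ (Fin d)) 1) :
    Continuous (sphProj θ) :=
  Continuous.inner continuous_const continuous_id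

lemma sphProj_abs_le {d : ℕ} (θ : Metric.sphere (0 : EuclideanSpace ℝ (Fin d)) 1)
    (x : EuclideanSpace ℝ (Fin d)) : |sphProj θ x| ≤ ‖x‖ := by
  have h := abs_real_inner_le_norm (θ : EuclideanSpace ℝ (Fin d)) x
  rwa [norm_eq_of_mem_sphere, one_mul] at h

lemma sphProj_sub_abs_le {d : ℕ} (θ θ' : Metric.sphere (0 : EuclideanSpace ℝ (Fin d)) 1)
    (x : EuclideanSpace ℝ (Fin d)) :
    |sphProj θ x - sphProj θ' x| ≤ dist θ θ' * ‖x‖ := by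
  have h1 : sphProj θ x - sphProj θ' x
      = inner (𝕜 := ℝ) ((θ : EuclideanSpace ℝ (Fin d)) - θ') x := by
    rw [inner_sub_left]; rfl
  rw [h1]
  have h := abs_real_inner_le_norm ((θ : EuclideanSpace ℝ (Fin d)) - θ') x
  rwa [← dist_eq_norm, ← Subtype.dist_eq] at h

lemma map_compl_zero {d : ℕ} (θ : Metric.sphere (0 : EuclideanSpace ℝ (Fin d)) 1)
    (μ : Measure (EuclideanSpace ℝ (Fin d))) [IsProbabilityMeasure μ]
    {s : Set (EuclideanSpace ℝ (Fin d))} (hs : MeasurableSet s) (h1 : μ s = 1)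
    {K : Set ℝ} (hK : MeasurableSet K) (himg : ∀ x ∈ s, sphProj θ x ∈ K) :
    (μ.map (sphProj θ)) Kᶜ = 0 := by
  rw [Measure.map_apply (sphProj_cont θ).measurable hK.compl]
  have hsub : sphProj θ ⁻¹' Kᶜ ⊆ sᶜ := fun x hx hxs => hx (himg x hxs)
  have hs0 : μ sᶜ = 0 := by
    rw [measure_compl hs (measure_ne_top μ s), h1, measure_univ, tsub_self]
  exact measure_mono_null hsub hs0

lemma w1_dir {d : ℕ} (μ : Measure (EuclideanSpace ℝ (Fin d))) [IsProbabilityMeasure μ]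
    {s : Set (EuclideanSpace ℝ (Fin d))} (hs : MeasurableSet s) (h1 : μ s = 1)
    {M : ℝ} (hM : ∀ x ∈ s, ‖x‖ ≤ M)
    (θ θ' : Metric.sphere (0 : EuclideanSpace ℝ (Fin d)) 1) :
    WpPow 1 (μ.map (sphProj θ)) (μ.map (sphProj θ')) ≤ M * dist θ θ' := by
  set f : EuclideanSpace ℝ (Fin d) → ℝ × ℝ := fun x => (sphProj θ x, sphProj θ' x) with hf
  have hfm : Measurable f := ((sphProj_cont θ).prodMk (sphProj_cont θ')).measurable
  have hmem : (∫ z, ‖z.1 - z.2‖ ^ (1:ℝ) ∂(μ.map f)) ∈ cset 1 (μ.map (sphProj θ))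
      (μ.map (sphProj θ')) := by
    refine ⟨μ.map f, ?_, ?_, rfl⟩
    · rw [Measure.map_map measurable_fst hfm]; rfl
    · rw [Measure.map_map measurable_snd hfm]; rfl
  have hEq : ∫ z, ‖z.1 - z.2‖ ^ (1:ℝ) ∂(μ.map f)
      = ∫ x, ‖sphProj θ x - sphProj θ' x‖ ∂μ := by
    rw [integral_map hfm.aemeasurable (continuous_costFn zero_le_one).aestronglyMeasurable]
    simp [Real.rpow_one, hf]
  have aeS : ∀ᵐ x ∂μ, x ∈ s := by
    rw [ae_iff]
    have : {x | ¬ x ∈ s} = sᶜ := rfl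
    rw [this, measure_compl hs (measure_ne_top μ s), h1, measure_univ, tsub_self]
  have aebd : ∀ᵐ x ∂μ, ‖sphProj θ x - sphProj θ' x‖ ≤ dist θ θ' * M := by
    filter_upwards [aeS] with x hx
    rw [Real.norm_eq_abs]
    calc |sphProj θ x - sphProj θ' x| ≤ dist θ θ' * ‖x‖ := sphProj_sub_abs_le θ θ' x
      _ ≤ dist θ θ' * M := mul_le_mul_of_nonneg_left (hM x hx) dist_nonneg
  have hint : Integrable (fun x => ‖sphProj θ x - sphProj θ' x‖) μ := by
    refine (integrable_const (dist θ θ' * M)).mono'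
      (((sphProj_cont θ).sub (sphProj_cont θ')).norm).aestronglyMeasurable ?_
    filter_upwards [aebd] with x hx
    rwa [norm_norm]
  have : ∫ x, ‖sphProj θ x - sphProj θ' x‖ ∂μ ≤ dist θ θ' * M := by
    calc ∫ x, ‖sphProj θ x - sphProj θ' x‖ ∂μ ≤ ∫ _x, dist θ θ' * M ∂μ :=
          integral_mono_ae hint (integrable_const _) aebd
      _ = dist θ θ' * M := by simp
  calc WpPow 1 (μ.map (sphProj θ)) (μ.map (sphProj θ')) ≤ _ := wpPow_le_of_mem hmem
    _ = ∫ x, ‖sphProj θ x - sphProj θ' x‖ ∂μ := hEq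
    _ ≤ dist θ θ' * M := this
    _ = M * dist θ θ' := mul_comm _ _

lemma wp_theta_cont {d : ℕ} (p M : ℝ) (hp : 1 ≤ p) (hM : 0 ≤ M)
    (μ ν : Measure (EuclideanSpace ℝ (Fin d))) [IsProbabilityMeasure μ]
    [IsProbabilityMeasure ν] {s : Set (EuclideanSpace ℝ (Fin d))}
    (hs : MeasurableSet s) (h1 : μ s = 1) (h2 : ν s = 1)
    (hMs : ∀ x ∈ s, ‖x‖ ≤ M) :
    Continuous fun θ : Metric.sphere (0 : EuclideanSpace ℝ (Fin d)) 1 =>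
      WpPow p (μ.map (sphProj θ)) (ν.map (sphProj θ)) := by
  set L : ℝ := p * (2*M+1) ^ (p - 1) * (M + M) with hL
  refine (LipschitzWith.of_dist_le_mul (K := L.toNNReal) fun θ θ' => ?_).continuous
  haveI i1 : IsProbabilityMeasure (μ.map (sphProj θ)) :=
    Measure.isProbabilityMeasure_map (sphProj_cont θ).measurable.aemeasurable
  haveI i2 : IsProbabilityMeasure (ν.map (sphProj θ)) :=
    Measure.isProbabilityMeasure_map (sphProj_cont θ).measurable.aemeasurable
  haveI i3 : IsProbabilityMeasure (μ.map (sphProj θ')) :=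
    Measure.isProbabilityMeasure_map (sphProj_cont θ').measurable.aemeasurable
  haveI i4 : IsProbabilityMeasure (ν.map (sphProj θ')) :=
    Measure.isProbabilityMeasure_map (sphProj_cont θ').measurable.aemeasurable
  have himg : ∀ (ϑ : Metric.sphere (0 : EuclideanSpace ℝ (Fin d)) 1),
      ∀ x ∈ s, sphProj ϑ x ∈ Icc (-M) M := by
    intro ϑ x hx
    have := (sphProj_abs_le ϑ x).trans (hMs x hx)
    exact abs_le.1 this
  have hIm : MeasurableSet (Icc (-M) M) := measurableSet_Icc
  have hdiam : Metric.diam (Icc (-M) M) ≤ 2*M+1 := by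
    rw [Real.diam_Icc (by linarith)]; linarith
  have key := wpPow_abs_key p (2*M+1) hp (by linarith) (Icc (-M) M) isCompact_Icc hdiam
    (μ.map (sphProj θ)) (ν.map (sphProj θ)) (μ.map (sphProj θ')) (ν.map (sphProj θ'))
    (map_compl_zero θ μ hs h1 hIm (himg θ))
    (map_compl_zero θ ν hs h2 hIm (himg θ))
    (map_compl_zero θ' μ hs h1 hIm (himg θ'))
    (map_compl_zero θ' ν hs h2 hIm (himg θ'))
  have w1 := w1_dir μ hs h1 hMs θ θ'
  have w2 := w1_dir ν hs h2 hMs θ θ'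
  have hcp : (0:ℝ) ≤ p * (2*M+1) ^ (p - 1) := by
    have : (0:ℝ) ≤ (2*M+1) ^ (p-1) := Real.rpow_nonneg (by linarith) _
    nlinarith
  rw [Real.dist_eq]
  calc |WpPow p (μ.map (sphProj θ)) (ν.map (sphProj θ))
        - WpPow p (μ.map (sphProj θ')) (ν.map (sphProj θ'))|
      ≤ p * (2*M+1) ^ (p - 1) * (WpPow 1 (μ.map (sphProj θ)) (μ.map (sphProj θ'))
        + WpPow 1 (ν.map (sphProj θ)) (ν.map (sphProj θ'))) := key
    _ ≤ p * (2*M+1) ^ (p - 1) * (M * dist θ θ' + M * dist θ θ') := by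
        have hw1' : (0:ℝ) ≤ WpPow 1 (μ.map (sphProj θ)) (μ.map (sphProj θ')) :=
          wpPow_nonneg _ _ _
        have hw2' : (0:ℝ) ≤ WpPow 1 (ν.map (sphProj θ)) (ν.map (sphProj θ')) :=
          wpPow_nonneg _ _ _
        refine mul_le_mul_of_nonneg_left ?_ hcp
        linarith
    _ = L * dist θ θ' := by rw [hL]; ring
    _ ≤ L.toNNReal * dist θ θ' :=
        mul_le_mul_of_nonneg_right (Real.le_coe_toNNReal L) dist_nonneg


/-- On a compact set of diameter `R`, the p-th power sliced Wasserstein distance is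
jointly Lipschitz-comparable with the sliced 1-Wasserstein distance, with a constant
depending only on `p` and `R`. -/
theorem swpPow_diff_le_sw1 (d : ℕ) (hd : 2 ≤ d) (p R : ℝ) (hp : 1 ≤ p) (hR : 0 < R) :
    ∃ C : ℝ, 0 < C ∧
      ∀ (s : Set (EuclideanSpace ℝ (Fin d))), IsCompact s → Metric.diam s ≤ R →
      ∀ (G₁ G₂ G Ghat : Measure (EuclideanSpace ℝ (Fin d))),
        IsProbabilityMeasure G₁ → IsProbabilityMeasure G₂ →
        IsProbabilityMeasure G → IsProbabilityMeasure Ghat →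
        G₁ s = 1 → G₂ s = 1 → G s = 1 → Ghat s = 1 →
        |SWpPow p G₁ G - SWpPow p G₂ Ghat| ≤ C * (SWpPow 1 G₁ G₂ + SWpPow 1 G Ghat) := by
  have hC0 : 0 < p * R ^ (p - 1) := by
    have h1 : (0:ℝ) < R ^ (p-1) := Real.rpow_pos_of_pos hR _
    have hp0 : (0:ℝ) < p := by linarith
    positivity
  refine ⟨p * R ^ (p - 1), hC0, ?_⟩
  intro s hs hsd G₁ G₂ G Ghat i₁ i₂ i₃ i₄ h₁ h₂ h₃ h₄
  haveI := i₁; haveI := i₂; haveI := i₃; haveI := i₄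
  have hsm : MeasurableSet s := hs.measurableSet
  obtain ⟨M0, hM0⟩ := isBounded_iff_forall_norm_le.1 hs.isBounded
  set M : ℝ := max M0 0 with hM
  have hMnn : 0 ≤ M := le_max_right _ _
  have hMs : ∀ x ∈ s, ‖x‖ ≤ M := fun x hx => (hM0 x hx).trans (le_max_left _ _)
  -- the four functions of θ
  set Sp := Metric.sphere (0 : EuclideanSpace ℝ (Fin d)) 1 with hSp
  set F : Sp → ℝ := fun θ => WpPow p (G₁.map (sphProj θ)) (G.map (sphProj θ)) with hF
  set F' : Sp → ℝ := fun θ => WpPow p (G₂.map (sphProj θ)) (Ghat.map (sphProj θ)) with hF'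
  set H1 : Sp → ℝ := fun θ => WpPow 1 (G₁.map (sphProj θ)) (G₂.map (sphProj θ)) with hH1
  set H2 : Sp → ℝ := fun θ => WpPow 1 (G.map (sphProj θ)) (Ghat.map (sphProj θ)) with hH2
  have hcF : Continuous F := wp_theta_cont p M hp hMnn G₁ G hsm h₁ h₃ hMs
  have hcF' : Continuous F' := wp_theta_cont p M hp hMnn G₂ Ghat hsm h₂ h₄ hMs
  have hcH1 : Continuous H1 := wp_theta_cont 1 M le_rfl hMnn G₁ G₂ hsm h₁ h₂ hMs
  have hcH2 : Continuous H2 := wp_theta_cont 1 M le_rfl hMnn G Ghat hsm h₃ h₄ hMs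
  have hintegrable : ∀ f : Sp → ℝ, Continuous f → Integrable f (uniformSphere d) := by
    intro f hf
    rw [← integrableOn_univ]
    exact hf.continuousOn.integrableOn_compact isCompact_univ
  have iF := hintegrable F hcF
  have iF' := hintegrable F' hcF'
  have iH1 := hintegrable H1 hcH1
  have iH2 := hintegrable H2 hcH2
  -- pointwise bound
  have hpt : ∀ θ : Sp, |F θ - F' θ| ≤ p * R ^ (p - 1) * (H1 θ + H2 θ) := by
    intro θ
    haveI j1 : IsProbabilityMeasure (G₁.map (sphProj θ)) :=
      Measure.isProbabilityMeasure_map (sphProj_cont θ).measurable.aemeasurable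
    haveI j2 : IsProbabilityMeasure (G.map (sphProj θ)) :=
      Measure.isProbabilityMeasure_map (sphProj_cont θ).measurable.aemeasurable
    haveI j3 : IsProbabilityMeasure (G₂.map (sphProj θ)) :=
      Measure.isProbabilityMeasure_map (sphProj_cont θ).measurable.aemeasurable
    haveI j4 : IsProbabilityMeasure (Ghat.map (sphProj θ)) :=
      Measure.isProbabilityMeasure_map (sphProj_cont θ).measurable.aemeasurable
    set K : Set ℝ := sphProj θ '' s with hK
    have hKc : IsCompact K := hs.image (sphProj_cont θ)
    have hKm : MeasurableSet K := hKc.measurableSet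
    have hKd : Metric.diam K ≤ R := by
      have hlip : LipschitzWith 1 (sphProj θ) := by
        refine LipschitzWith.of_dist_le_mul fun x y => ?_
        rw [Real.dist_eq, NNReal.coe_one, one_mul, dist_eq_norm]
        have h1 : sphProj θ x - sphProj θ y
            = inner (𝕜 := ℝ) (θ : EuclideanSpace ℝ (Fin d)) (x - y) := by
          rw [inner_sub_right]; rfl
        rw [h1]
        exact sphProj_abs_le θ (x - y)
      have := hlip.diam_image_le s hs.isBounded
      rw [NNReal.coe_one, one_mul] at this
      exact this.trans hsd
    have himgK : ∀ x ∈ s, sphProj θ x ∈ K := fun x hx => Set.mem_image_of_mem _ hx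
    exact wpPow_abs_key p R hp hR K hKc hKd
      (G₁.map (sphProj θ)) (G.map (sphProj θ)) (G₂.map (sphProj θ)) (Ghat.map (sphProj θ))
      (map_compl_zero θ G₁ hsm h₁ hKm himgK)
      (map_compl_zero θ G hsm h₃ hKm himgK)
      (map_compl_zero θ G₂ hsm h₂ hKm himgK)
      (map_compl_zero θ Ghat hsm h₄ hKm himgK)
  -- integrate
  have hSW : SWpPow p G₁ G = ∫ θ, F θ ∂(uniformSphere d) := rfl
  have hSW' : SWpPow p G₂ Ghat = ∫ θ, F' θ ∂(uniformSphere d) := rfl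
  have hSW1 : SWpPow 1 G₁ G₂ = ∫ θ, H1 θ ∂(uniformSphere d) := rfl
  have hSW2 : SWpPow 1 G Ghat = ∫ θ, H2 θ ∂(uniformSphere d) := rfl
  rw [hSW, hSW', hSW1, hSW2]
  have habs : |∫ θ, F θ ∂(uniformSphere d) - ∫ θ, F' θ ∂(uniformSphere d)|
      ≤ ∫ θ, |F θ - F' θ| ∂(uniformSphere d) := by
    rw [← integral_sub iF iF']
    have := norm_integral_le_integral_norm (μ := uniformSphere d) (fun θ => F θ - F' θ)
    simpa [Real.norm_eq_abs] using this
  have hmono : ∫ θ, |F θ - F' θ| ∂(uniformSphere d)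
      ≤ ∫ θ, p * R ^ (p - 1) * (H1 θ + H2 θ) ∂(uniformSphere d) := by
    refine integral_mono (iF.sub iF').abs ?_ hpt
    exact ((iH1.add iH2).const_mul _)
  have hsplit : ∫ θ, p * R ^ (p - 1) * (H1 θ + H2 θ) ∂(uniformSphere d)
      = p * R ^ (p - 1) * ((∫ θ, H1 θ ∂(uniformSphere d)) + ∫ θ, H2 θ ∂(uniformSphere d)) := by
    rw [MeasureTheory.integral_const_mul, integral_add iH1 iH2]
  calc |∫ θ, F θ ∂(uniformSphere d) - ∫ θ, F' θ ∂(uniformSphere d)|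
      ≤ ∫ θ, |F θ - F' θ| ∂(uniformSphere d) := habs
    _ ≤ ∫ θ, p * R ^ (p - 1) * (H1 θ + H2 θ) ∂(uniformSphere d) := hmono
    _ = _ := hsplit
end
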